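/- arXiv:0909.3988 — 3 statements merged into one kernel-verified Lean document; each statement's English description precedes it below -/
import Mathlib

section
/- Let z₁, z₂, …, z_m ∈ ℂ and let H > 0. Then there exist l ∈ {1, …, m}, points c₁, …, c_l ∈ ℂ and radii r₁, …, r_l > 0 with Σ_{k=1}^l r_k² ≤ 4H², such that Σ_{k=1}^m 1/|z − z_k| ≤ 2m/H for every z ∈ ℂ lying outside the union of the open disks D(c_k, r_k), k = 1, …, l. -/
set_option maxHeartbeats 1000000

open Finset Metric
open scoped Classical

namespace FM

noncomputable def rho (m : ℕ) (H : ℝ) (k : ℕ) : ℝ := Real.sqrt k * H / Real.sqrt m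

lemma rho_nonneg (m : ℕ) {H : ℝ} (hH : 0 < H) (k : ℕ) : 0 ≤ rho m H k := by
  unfold rho; positivity

lemma rho_mono (m : ℕ) {H : ℝ} (hH : 0 < H) {j k : ℕ} (h : j ≤ k) :
    rho m H j ≤ rho m H k := by
  unfold rho
  gcongr
  all_goals first | exact_mod_cast h | positivity

lemma rho_pos {m : ℕ} (hm : 1 ≤ m) {H : ℝ} (hH : 0 < H) {k : ℕ} (hk : 1 ≤ k) :
    0 < rho m H k := by
  unfold rho
  have h1 : 0 < Real.sqrt k := Real.sqrt_pos.2 (by exact_mod_cast hk)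
  have h2 : 0 < Real.sqrt m := Real.sqrt_pos.2 (by exact_mod_cast hm)
  positivity

variable {m : ℕ} (z : Fin m → ℂ) (H : ℝ)

noncomputable def T (S : Finset (Fin m)) (c : ℂ) (p : ℕ) : Finset (Fin m) :=
  S.filter (fun j => z j ∈ closedBall c (rho m H p))

noncomputable def pmax (S : Finset (Fin m)) : ℕ :=
  Nat.findGreatest (fun p => ∃ c : ℂ, p ≤ (T z H S c p).card) S.card

lemma pmax_pos {H : ℝ} (hH : 0 < H) {S : Finset (Fin m)} (hS : S.Nonempty) :
    1 ≤ pmax z H S := by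
  obtain ⟨j, hj⟩ := hS
  apply Nat.le_findGreatest
  · exact Finset.card_pos.2 ⟨j, hj⟩
  · refine ⟨z j, ?_⟩
    have : j ∈ T z H S (z j) 1 := by
      simp [T, hj, rho_nonneg m hH 1]
    exact Finset.card_pos.2 ⟨j, this⟩

lemma pmax_le (S : Finset (Fin m)) : pmax z H S ≤ S.card := Nat.findGreatest_le _

lemma pmax_not_good {S : Finset (Fin m)} {k : ℕ} (hk : pmax z H S < k) (c : ℂ) :
    (T z H S c k).card < k := by
  by_contra hcon
  push_neg at hcon
  rcases le_or_gt k S.card with h | h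
  · exact Nat.findGreatest_is_greatest hk h ⟨c, hcon⟩
  · have h2 : (T z H S c k).card ≤ S.card := Finset.card_filter_le _ _
    omega

noncomputable def cmax {H : ℝ} (hH : 0 < H) (S : Finset (Fin m)) : ℂ :=
  if h : ∃ c : ℂ, pmax z H S ≤ (T z H S c (pmax z H S)).card then h.choose else 0

lemma cmax_spec {H : ℝ} (hH : 0 < H) {S : Finset (Fin m)} (hS : S.Nonempty) :
    pmax z H S ≤ (T z H S (cmax z hH S) (pmax z H S)).card := by
  have h1 : 1 ≤ pmax z H S := pmax_pos z hH hS
  have h2 : (fun p => ∃ c : ℂ, p ≤ (T z H S c p).card) (pmax z H S) :=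
    Nat.findGreatest_of_ne_zero rfl (Nat.one_le_iff_ne_zero.mp h1)
  rw [cmax, dif_pos h2]
  exact h2.choose_spec

lemma T_nonempty {H : ℝ} (hH : 0 < H) {S : Finset (Fin m)} (hS : S.Nonempty) :
    (T z H S (cmax z hH S) (pmax z H S)).Nonempty := by
  apply Finset.card_pos.1
  exact lt_of_lt_of_le (pmax_pos z hH hS) (cmax_spec z hH hS)

lemma card_sdiff_lt {H : ℝ} (hH : 0 < H) {S : Finset (Fin m)} (hS : S.Nonempty) :
    (S \ T z H S (cmax z hH S) (pmax z H S)).card < S.card :=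
  Finset.card_lt_card
    (Finset.sdiff_ssubset (Finset.filter_subset _ _) (T_nonempty z hH hS))

noncomputable def process {H : ℝ} (hH : 0 < H) (S : Finset (Fin m)) : List (ℂ × ℕ) :=
  if hS : S.Nonempty then
    (cmax z hH S, pmax z H S) ::
      process hH (S \ T z H S (cmax z hH S) (pmax z H S))
  else []
  termination_by S.card
  decreasing_by exact card_sdiff_lt z hH hS


lemma process_snd_pos {H : ℝ} (hH : 0 < H) (S : Finset (Fin m)) :
    ∀ cp ∈ process z hH S, 1 ≤ cp.2 := by
  rw [process]
  split_ifs with hS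
  · rintro cp hcp
    rcases List.mem_cons.1 hcp with h | h
    · subst h; exact pmax_pos z hH hS
    · exact process_snd_pos hH _ cp h
  · simp
  termination_by S.card
  decreasing_by exact card_sdiff_lt z hH hS

lemma process_sum_le {H : ℝ} (hH : 0 < H) (S : Finset (Fin m)) :
    ((process z hH S).map Prod.snd).sum ≤ S.card := by
  rw [process]
  split_ifs with hS
  · have h1 := process_sum_le hH (S \ T z H S (cmax z hH S) (pmax z H S))
    have h2 : (S \ T z H S (cmax z hH S) (pmax z H S)).card
        = S.card - (T z H S (cmax z hH S) (pmax z H S)).card :=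
      Finset.card_sdiff_of_subset (Finset.filter_subset _ _)
    have h3 := cmax_spec z hH hS
    have h4 : (T z H S (cmax z hH S) (pmax z H S)).card ≤ S.card :=
      Finset.card_filter_le _ _
    simp only [List.map_cons, List.sum_cons]
    omega
  · simp
  termination_by S.card
  decreasing_by exact card_sdiff_lt z hH hS

lemma process_ne_nil {H : ℝ} (hH : 0 < H) {S : Finset (Fin m)} (hS : S.Nonempty) :
    process z hH S ≠ [] := by
  rw [process, dif_pos hS]
  simp

lemma counting {H : ℝ} (hH : 0 < H) (S : Finset (Fin m)) (w : ℂ)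
    (hw : ∀ cp ∈ process z hH S, w ∉ ball cp.1 (2 * rho m H cp.2))
    (k : ℕ) (hk : 1 ≤ k) :
    (S.filter (fun j => dist w (z j) < rho m H k)).card < k := by
  rw [process] at hw
  split_ifs at hw with hS
  · set p := pmax z H S with hp
    set c := cmax z hH S with hc
    have hw1 : w ∉ ball c (2 * rho m H p) :=
      hw (c, p) List.mem_cons_self
    have hw2 : ∀ cp ∈ process z hH (S \ T z H S c p), w ∉ ball cp.1 (2 * rho m H cp.2) :=
      fun cp hcp => hw cp (List.mem_cons_of_mem _ hcp)
    rcases le_or_gt k p with hkp | hkp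
    · -- points near w are not in T
      have hsub : S.filter (fun j => dist w (z j) < rho m H k)
          ⊆ (S \ T z H S c p).filter (fun j => dist w (z j) < rho m H k) := by
        intro j hj
        rw [Finset.mem_filter] at hj
        rw [Finset.mem_filter, Finset.mem_sdiff]
        refine ⟨⟨hj.1, ?_⟩, hj.2⟩
        intro hjT
        rw [T, Finset.mem_filter, mem_closedBall] at hjT
        rw [mem_ball, not_lt] at hw1
        have h5 : rho m H k ≤ rho m H p := rho_mono m hH hkp
        have h6 : dist w c ≤ dist w (z j) + dist (z j) c := dist_triangle _ _ _
        have := hj.2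
        linarith [hjT.2]
      calc (S.filter (fun j => dist w (z j) < rho m H k)).card
          ≤ ((S \ T z H S c p).filter (fun j => dist w (z j) < rho m H k)).card :=
            Finset.card_le_card hsub
        _ < k := counting hH _ w hw2 k hk
    · -- maximality
      have h7 : (T z H S w k).card < k := pmax_not_good z H hkp w
      refine lt_of_le_of_lt (Finset.card_le_card ?_) h7
      intro j hj
      rw [Finset.mem_filter] at hj
      rw [T, Finset.mem_filter, mem_closedBall, dist_comm]
      exact ⟨hj.1, hj.2.le⟩
  · rw [Finset.not_nonempty_iff_eq_empty] at hS
    subst hS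
    rw [Finset.filter_empty, Finset.card_empty]
    omega
  termination_by S.card
  decreasing_by exact card_sdiff_lt z hH hS


lemma sum_one_div_sqrt (n : ℕ) :
    ∑ i ∈ Finset.range n, 1 / Real.sqrt (i + 1) ≤ 2 * Real.sqrt n := by
  induction n with
  | zero => simp
  | succ n ih =>
    rw [Finset.sum_range_succ]
    have ha : (0:ℝ) ≤ Real.sqrt n := Real.sqrt_nonneg _
    have hb : 0 < Real.sqrt ((n:ℝ) + 1) := Real.sqrt_pos.2 (by positivity)
    have ha2 : Real.sqrt (n:ℝ) ^ 2 = n := Real.sq_sqrt (by positivity)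
    have hb2 : Real.sqrt ((n:ℝ) + 1) ^ 2 = (n:ℝ) + 1 := Real.sq_sqrt (by positivity)
    have h1 : 1 / Real.sqrt ((n:ℝ) + 1)
        ≤ 2 * Real.sqrt ((n:ℝ) + 1) - 2 * Real.sqrt n := by
      rw [div_le_iff₀ hb]
      nlinarith [sq_nonneg (Real.sqrt ((n:ℝ)+1) - Real.sqrt n)]
    have h2 : Real.sqrt ((n:ℕ) + 1 : ℕ) = Real.sqrt ((n:ℝ) + 1) := by push_cast; rfl
    rw [h2]
    linarith

lemma fin_sum_get {α β : Type*} [AddCommMonoid β] (L : List α) (f : α → β) :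
    ∑ k : Fin L.length, f (L.get k) = (L.map f).sum := by
  induction L with
  | nil => simp
  | cons a t ih => simp [Fin.sum_univ_succ, ih]

lemma length_le_sum {L : List (ℂ × ℕ)} (h : ∀ cp ∈ L, 1 ≤ cp.2) :
    L.length ≤ (L.map Prod.snd).sum := by
  induction L with
  | nil => simp
  | cons a t ih =>
    simp only [List.length_cons, List.map_cons, List.sum_cons]
    have h1 := h a List.mem_cons_self
    have h2 := ih (fun cp hcp => h cp (List.mem_cons_of_mem _ hcp))
    omega

lemma rho_sq {m : ℕ} (hm : 1 ≤ m) {H : ℝ} (hH : 0 < H) (p : ℕ) :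
    (2 * rho m H p) ^ 2 = 4 * H ^ 2 / m * p := by
  have hm0 : (0:ℝ) < m := by exact_mod_cast hm
  rw [rho, mul_pow, div_pow, mul_pow, Real.sq_sqrt (by positivity : (0:ℝ) ≤ (p:ℝ)),
    Real.sq_sqrt hm0.le]
  ring

lemma sum_le_of_count {m : ℕ} (z : Fin m → ℂ) (hm : 1 ≤ m) {H : ℝ} (hH : 0 < H) (w : ℂ)
    (hcount : ∀ k, 1 ≤ k →
      ((univ : Finset (Fin m)).filter (fun j => dist w (z j) < rho m H k)).card < k) :
    ∑ j, 1 / ‖w - z j‖ ≤ 2 * m / H := by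
  set d : Fin m → ℝ := fun j => dist w (z j) with hd
  set σ := Tuple.sort d with hσ
  have key : ∀ k : Fin m, rho m H ((k : ℕ) + 1) ≤ d (σ k) := by
    intro k
    by_contra hcon
    push_neg at hcon
    have hsub : (Finset.Iic k).image σ ⊆
        (univ : Finset (Fin m)).filter (fun j => dist w (z j) < rho m H ((k : ℕ) + 1)) := by
      intro j hj
      rw [Finset.mem_image] at hj
      obtain ⟨i, hi, rfl⟩ := hj
      rw [Finset.mem_Iic] at hi
      rw [Finset.mem_filter]
      refine ⟨Finset.mem_univ _, ?_⟩
      have := Tuple.monotone_sort d hi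
      simp only [Function.comp] at this
      exact lt_of_le_of_lt this hcon
    have hcard : ((Finset.Iic k).image σ).card = (k : ℕ) + 1 := by
      rw [Finset.card_image_of_injective _ σ.injective, Fin.card_Iic]
    have := Finset.card_le_card hsub
    rw [hcard] at this
    exact absurd (lt_of_le_of_lt this (hcount ((k : ℕ) + 1) (by omega))) (lt_irrefl _)
  have hd_eq : ∀ j, ‖w - z j‖ = d j := fun j => (Complex.dist_eq w (z j)).symm
  calc ∑ j, 1 / ‖w - z j‖ = ∑ j, 1 / d j := by
        refine Finset.sum_congr rfl fun j _ => by rw [hd_eq]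
    _ = ∑ k : Fin m, 1 / d (σ k) := (Equiv.sum_comp σ (fun j => 1 / d j)).symm
    _ ≤ ∑ k : Fin m, 1 / rho m H ((k : ℕ) + 1) := by
        refine Finset.sum_le_sum fun k _ => ?_
        exact one_div_le_one_div_of_le (rho_pos hm hH (by omega)) (key k)
    _ = ∑ i ∈ Finset.range m, 1 / rho m H (i + 1) :=
        Fin.sum_univ_eq_sum_range (fun i => 1 / rho m H (i + 1)) m
    _ = (Real.sqrt m / H) * ∑ i ∈ Finset.range m, 1 / Real.sqrt (i + 1) := by
        rw [Finset.mul_sum]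
        refine Finset.sum_congr rfl fun i _ => ?_
        have h1 : Real.sqrt ((i:ℝ) + 1) ≠ 0 := by positivity
        have h2 : Real.sqrt (m:ℝ) ≠ 0 := by
          have : (0:ℝ) < m := by exact_mod_cast hm
          positivity
        rw [rho]
        push_cast
        field_simp
    _ ≤ (Real.sqrt m / H) * (2 * Real.sqrt m) := by
        have h3 : (0:ℝ) ≤ Real.sqrt m / H := by positivity
        exact mul_le_mul_of_nonneg_left (sum_one_div_sqrt m) h3
    _ = 2 * m / H := by
        rw [div_mul_eq_mul_div, ← mul_assoc]
        rw [mul_comm (Real.sqrt m) 2, mul_assoc, Real.mul_self_sqrt (by positivity : (0:ℝ) ≤ m)]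

end FM

/-- The covering lemma of Fuchs and Macintyre. -/
theorem fuchs_macintyre (m : ℕ) (hm : 1 ≤ m) (z : Fin m → ℂ) (H : ℝ) (hH : 0 < H) :
    ∃ l : ℕ, 1 ≤ l ∧ l ≤ m ∧ ∃ (c : Fin l → ℂ) (r : Fin l → ℝ),
      (∀ k, 0 < r k) ∧ (∑ k, r k ^ 2) ≤ 4 * H ^ 2 ∧
      ∀ w : ℂ, (∀ k, w ∉ Metric.ball (c k) (r k)) →
        (∑ j, 1 / ‖w - z j‖) ≤ 2 * m / H := by
  have hne : (Finset.univ : Finset (Fin m)).Nonempty := ⟨⟨0, hm⟩, Finset.mem_univ _⟩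
  set L := FM.process z hH (Finset.univ : Finset (Fin m)) with hL
  have hsnd : ∀ cp ∈ L, 1 ≤ cp.2 := FM.process_snd_pos z hH _
  have hsum : (L.map Prod.snd).sum ≤ m := by
    have := FM.process_sum_le z hH (Finset.univ : Finset (Fin m))
    simpa using this
  refine ⟨L.length, ?_, ?_, fun k => (L.get k).1, fun k => 2 * FM.rho m H (L.get k).2,
    ?_, ?_, ?_⟩
  · exact List.length_pos_iff.2 (FM.process_ne_nil z hH hne)
  · exact le_trans (FM.length_le_sum hsnd) hsum
  · intro k
    have h1 : 1 ≤ (L.get k).2 := hsnd _ (L.get_mem k)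
    have := FM.rho_pos hm hH h1
    show (0:ℝ) < 2 * FM.rho m H (L.get k).2
    linarith
  · have hm0 : (m:ℝ) ≠ 0 := by positivity
    calc ∑ k : Fin L.length, (2 * FM.rho m H (L.get k).2) ^ 2
        = ∑ k : Fin L.length, 4 * H ^ 2 / m * ((L.get k).2 : ℝ) := by
          exact Finset.sum_congr rfl fun k _ => FM.rho_sq hm hH _
      _ = 4 * H ^ 2 / m * ∑ k : Fin L.length, ((L.get k).2 : ℝ) := by
          rw [Finset.mul_sum]
      _ = 4 * H ^ 2 / m * ((L.map Prod.snd).sum : ℝ) := by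
          congr 1
          rw [FM.fin_sum_get L (fun cp => (cp.2 : ℝ)), Nat.cast_list_sum, List.map_map]
          rfl
      _ ≤ 4 * H ^ 2 / m * (m : ℝ) := by
          have h4 : (0:ℝ) ≤ 4 * H ^ 2 / m := by positivity
          have h5 : ((L.map Prod.snd).sum : ℝ) ≤ (m : ℝ) := by exact_mod_cast hsum
          exact mul_le_mul_of_nonneg_left h5 h4
      _ = 4 * H ^ 2 := div_mul_cancel₀ _ hm0
  · intro w hw
    have hball : ∀ cp ∈ L, w ∉ Metric.ball cp.1 (2 * FM.rho m H cp.2) := by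
      intro cp hcp
      obtain ⟨k, hk⟩ := List.mem_iff_get.1 hcp
      subst hk
      exact hw k
    refine FM.sum_le_of_count z hm hH w fun k hk => ?_
    exact FM.counting z hH Finset.univ w hball k hk
end

section
/- Let f be an entire function of finite order, not identically zero, and let n(r) denote the number of zeros of f (counted with multiplicity) in {|z| ≤ r}. Suppose there exist r₀ > 0 and K > 1 such that n(2r) ≤ K·n(r) for all r ≥ r₀. For μ > 0 let F_μ be the set of all r ≥ r₀ such that n(t) ≤ (t/r)^μ·n(r) for all t ≥ r and n(t) ≥ (t/r)^μ·n(r) for all r₀ ≤ t ≤ r. Then, given δ > 0, there exists μ > 0 such that the Lebesgue measure of F_μ ∩ [R, 2R] is at least (1 − δ)·R for all R ≥ 2r₀. -/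
open scoped ENNReal

/-- The maximum modulus `M(r,f) = max_{|z|=r} |f(z)|`. -/
noncomputable def maxMod (f : ℂ → ℂ) (r : ℝ) : ℝ :=
  sSup ((fun z => ‖f z‖) '' Metric.sphere (0 : ℂ) r)

/-- The order of growth `ρ(f) = limsup_{r→∞} log log M(r,f) / log r` (as an extended real). -/
noncomputable def orderOfGrowth (f : ℂ → ℂ) : EReal :=
  Filter.limsup
    (fun r : ℝ => ((Real.log (Real.log (maxMod f r)) / Real.log r : ℝ) : EReal)) Filter.atTop

/-- The multiplicity of `z₀` as a zero of `g`. -/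
noncomputable def zeroMult (g : ℂ → ℂ) (z₀ : ℂ) : ℕ :=
  sSup {m : ℕ | ∃ h : ℂ → ℂ, AnalyticAt ℂ h z₀ ∧ ∀ᶠ z in nhds z₀, g z = (z - z₀) ^ m * h z}

/-- The zero-counting function `n(r)`: the number of zeros of `f` (with multiplicity)
in the closed disk of radius `r` about the origin. -/
noncomputable def countZeros (f : ℂ → ℂ) (r : ℝ) : ℕ :=
  ∑ᶠ z ∈ Metric.closedBall (0 : ℂ) r, zeroMult f z


open scoped ENNReal


open Filter Set Metric

variable {f : ℂ → ℂ}

lemma not_eventually_zero (hf : Differentiable ℂ f) (hne : ∃ z, f z ≠ 0) (z₀ : ℂ) :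
    ¬ (∀ᶠ z in nhds z₀, f z = 0) := by
  intro h
  obtain ⟨w, hw⟩ := hne
  have hA : AnalyticOnNhd ℂ f Set.univ := fun z _ => hf.analyticAt z
  have := hA.eqOn_zero_of_preconnected_of_eventuallyEq_zero isPreconnected_univ
    (Set.mem_univ z₀) (h.mono fun z hz => hz)
  exact hw (this (Set.mem_univ w))

lemma exists_rep (hf : Differentiable ℂ f) (hne : ∃ z, f z ≠ 0) (z₀ : ℂ) :
    ∃ (d : ℕ) (g : ℂ → ℂ), AnalyticAt ℂ g z₀ ∧ g z₀ ≠ 0 ∧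
      (∀ᶠ z in nhds z₀, f z = (z - z₀) ^ d * g z) ∧ zeroMult f z₀ = d := by
  have hA := hf.analyticAt z₀
  have hord : analyticOrderAt f z₀ ≠ ⊤ := by
    intro h
    exact not_eventually_zero hf hne z₀ (analyticOrderAt_eq_top.1 h)
  set d := (analyticOrderAt f z₀).toNat with hd
  have horder : analyticOrderAt f z₀ = (d : ℕ∞) := (ENat.coe_toNat hord).symm
  obtain ⟨g, hg, hg0, hev⟩ := hA.analyticOrderAt_eq_natCast.1 horder
  have hev' : ∀ᶠ z in nhds z₀, f z = (z - z₀) ^ d * g z := by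
    filter_upwards [hev] with z hz
    simpa [smul_eq_mul] using hz
  refine ⟨d, g, hg, hg0, hev', ?_⟩
  have hset : {m : ℕ | ∃ h : ℂ → ℂ, AnalyticAt ℂ h z₀ ∧
      ∀ᶠ z in nhds z₀, f z = (z - z₀) ^ m * h z} = Set.Iic d := by
    ext m
    simp only [Set.mem_setOf_eq, Set.mem_Iic]
    constructor
    · rintro ⟨h, hh, hevh⟩
      by_contra hmd
      push_neg at hmd
      -- d < m
      have hfreq : ∀ᶠ z in nhdsWithin z₀ {z₀}ᶜ, g z = (z - z₀) ^ (m - d) * h z := by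
        have h1 : ∀ᶠ z in nhdsWithin z₀ {z₀}ᶜ, f z = (z - z₀) ^ d * g z :=
          nhdsWithin_le_nhds hev'
        have h2 : ∀ᶠ z in nhdsWithin z₀ {z₀}ᶜ, f z = (z - z₀) ^ m * h z :=
          nhdsWithin_le_nhds hevh
        filter_upwards [h1, h2, self_mem_nhdsWithin] with z e1 e2 hz
        have hzne : z - z₀ ≠ 0 := sub_ne_zero.2 hz
        have : (z - z₀) ^ d * g z = (z - z₀) ^ d * ((z - z₀) ^ (m - d) * h z) := by
          rw [← e1, e2, ← mul_assoc, ← pow_add]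
          congr 2
          omega
        exact mul_left_cancel₀ (pow_ne_zero d hzne) this
      have hg_tendsto : Tendsto g (nhdsWithin z₀ {z₀}ᶜ) (nhds (g z₀)) :=
        (hg.continuousAt.continuousWithinAt).tendsto
      have h0_tendsto : Tendsto (fun z => (z - z₀) ^ (m - d) * h z)
          (nhdsWithin z₀ {z₀}ᶜ) (nhds 0) := by
        have hc : ContinuousAt (fun z => (z - z₀) ^ (m - d) * h z) z₀ := by
          exact ((continuousAt_id.sub continuousAt_const).pow _).mul hh.continuousAt
        have := (hc.continuousWithinAt (s := {z₀}ᶜ)).tendsto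
        simpa [sub_self, zero_pow (by omega : m - d ≠ 0)] using this
      have := tendsto_nhds_unique (hg_tendsto.congr' hfreq) h0_tendsto
      exact hg0 this
    · intro hm
      refine ⟨fun z => (z - z₀) ^ (d - m) * g z,
        ((analyticAt_id.sub analyticAt_const).pow _).mul hg, ?_⟩
      filter_upwards [hev'] with z hz
      rw [hz, ← mul_assoc, ← pow_add]
      congr 2
      omega
  rw [zeroMult, hset, csSup_Iic]

lemma zeroMult_ne_zero_iff (hf : Differentiable ℂ f) (hne : ∃ z, f z ≠ 0) (z₀ : ℂ) :
    zeroMult f z₀ ≠ 0 ↔ f z₀ = 0 := by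
  obtain ⟨d, g, hg, hg0, hev, hmult⟩ := exists_rep hf hne z₀
  have hval : f z₀ = (z₀ - z₀) ^ d * g z₀ := hev.self_of_nhds
  rw [hmult]
  rcases Nat.eq_zero_or_pos d with h0 | hpos
  · subst h0
    simp only [pow_zero, one_mul] at hval
    simp [hval, hg0]
  · have : f z₀ = 0 := by
      rw [hval, sub_self, zero_pow (by omega : d ≠ 0), zero_mul]
    simp [this]
    omega


lemma abs_mem_closedBall {z : ℂ} {r : ℝ} : z ∈ Metric.closedBall (0 : ℂ) r ↔ ‖z‖ ≤ r := by
  simp [Metric.mem_closedBall, Complex.dist_eq]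

lemma finite_zeros (hf : Differentiable ℂ f) (hne : ∃ z, f z ≠ 0) (r : ℝ) :
    {z : ℂ | f z = 0 ∧ ‖z‖ ≤ r}.Finite := by
  by_contra hinf
  rw [← Set.not_infinite, not_not] at hinf
  have hsub : {z : ℂ | f z = 0 ∧ ‖z‖ ≤ r} ⊆ Metric.closedBall (0 : ℂ) r :=
    fun z hz => abs_mem_closedBall.2 hz.2
  obtain ⟨x, -, hx⟩ := hinf.exists_accPt_of_subset_isCompact (isCompact_closedBall 0 r) hsub
  have hfreq : ∃ᶠ z in nhdsWithin x {x}ᶜ, f z = 0 := by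
    have hsub2 : {z : ℂ | f z = 0 ∧ ‖z‖ ≤ r} ⊆ {z : ℂ | f z = 0} :=
      fun z hz => hz.1
    have : AccPt x (Filter.principal {z : ℂ | f z = 0}) :=
      hx.mono (Filter.principal_mono.2 hsub2)
    rwa [Filter.frequently_iff_neBot]
  have hA : AnalyticOnNhd ℂ f Set.univ := fun z _ => hf.analyticAt z
  have := hA.eqOn_zero_of_preconnected_of_frequently_eq_zero isPreconnected_univ
    (Set.mem_univ x) hfreq
  obtain ⟨w, hw⟩ := hne
  exact hw (this (Set.mem_univ w))

lemma countZeros_eq_sum (hf : Differentiable ℂ f) (hne : ∃ z, f z ≠ 0) (r : ℝ)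
    {s : Set ℂ} (hs : s = {z : ℂ | f z = 0 ∧ ‖z‖ ≤ r}) (hfin : s.Finite) :
    countZeros f r = ∑ z ∈ hfin.toFinset, zeroMult f z := by
  rw [countZeros]
  apply finsum_mem_eq_sum_of_inter_support_eq
  ext z
  simp only [Set.mem_inter_iff, Function.mem_support, Set.Finite.coe_toFinset, hs,
    Set.mem_setOf_eq, abs_mem_closedBall]
  constructor
  · rintro ⟨h1, h2⟩
    exact ⟨⟨(zeroMult_ne_zero_iff hf hne z).1 h2, h1⟩, h2⟩
  · rintro ⟨⟨h1, h2⟩, h3⟩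
    exact ⟨h2, h3⟩

lemma countZeros_mono (hf : Differentiable ℂ f) (hne : ∃ z, f z ≠ 0) {u v : ℝ} (huv : u ≤ v) :
    countZeros f u ≤ countZeros f v := by
  rw [countZeros_eq_sum hf hne u rfl (finite_zeros hf hne u),
    countZeros_eq_sum hf hne v rfl (finite_zeros hf hne v)]
  apply Finset.sum_le_sum_of_subset
  intro z hz
  simp only [Set.Finite.mem_toFinset, Set.mem_setOf_eq] at hz ⊢
  exact ⟨hz.1, hz.2.trans huv⟩

lemma countZeros_add (hf : Differentiable ℂ f) (hne : ∃ z, f z ≠ 0) {u v : ℝ} (huv : u ≤ v)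
    {s : Set ℂ} (hs : s = {z : ℂ | f z = 0 ∧ u < ‖z‖ ∧ ‖z‖ ≤ v})
    (hfin : s.Finite) :
    countZeros f v = countZeros f u + ∑ z ∈ hfin.toFinset, zeroMult f z := by
  rw [countZeros_eq_sum hf hne u rfl (finite_zeros hf hne u),
    countZeros_eq_sum hf hne v rfl (finite_zeros hf hne v)]
  rw [← Finset.sum_union]
  · apply Finset.sum_congr _ (fun _ _ => rfl)
    ext z
    simp only [Finset.mem_union, Set.Finite.mem_toFinset, Set.mem_setOf_eq, hs]
    constructor
    · rintro ⟨h1, h2⟩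
      rcases le_or_gt (‖z‖) u with h | h
      · exact Or.inl ⟨h1, h⟩
      · exact Or.inr ⟨h1, h, h2⟩
    · rintro (⟨h1, h2⟩ | ⟨h1, h2, h3⟩)
      · exact ⟨h1, h2.trans huv⟩
      · exact ⟨h1, h3⟩
  · rw [Finset.disjoint_left]
    intro z hz1 hz2
    simp only [Set.Finite.mem_toFinset, Set.mem_setOf_eq, hs] at hz1 hz2
    exact absurd hz2.2.1 (not_lt.2 hz1.2)

lemma annulus_finite (hf : Differentiable ℂ f) (hne : ∃ z, f z ≠ 0) (u v : ℝ) :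
    {z : ℂ | f z = 0 ∧ u < ‖z‖ ∧ ‖z‖ ≤ v}.Finite :=
  (finite_zeros hf hne v).subset fun z hz => ⟨hz.1, hz.2.2⟩


open MeasureTheory in
lemma covering_bound (ν : Measure ℝ) (E : Set ℝ) (c μ' : ℝ) (hμ' : 0 < μ')
    (h : ∀ x ∈ E, ∃ u v : ℝ, u ≤ x ∧ x ≤ v ∧ u < v ∧ v - u ≤ c ∧
      ENNReal.ofReal (μ' * (v - u)) ≤ ν (Set.Ioc u v)) :
    volume E ≤ ENNReal.ofReal (10 / μ') * ν Set.univ := by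
  classical
  choose! U V hU hV hUV hlen hν using h
  set ctr : ℝ → ℝ := fun a => (U a + V a) / 2 with hctr
  set rad : ℝ → ℝ := fun a => (V a - U a) / 2 with hrad
  have hradpos : ∀ a ∈ E, 0 < rad a := fun a ha => by
    simp only [hrad]; linarith [hUV a ha]
  have hradle : ∀ a ∈ E, rad a ≤ c / 2 := fun a ha => by
    simp only [hrad]; linarith [hlen a ha]
  obtain ⟨u, huE, hdisj, hcov⟩ :=
    Vitali.exists_disjoint_subfamily_covering_enlargement_closedBall E ctr rad (c / 2)
      hradle 4 (by norm_num)
  have hucount : u.Countable := by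
    apply Set.PairwiseDisjoint.countable_of_nonempty_interior (s := fun a => Metric.closedBall (ctr a) (rad a))
    · exact hdisj
    · intro a ha
      rw [interior_closedBall _ (hradpos a (huE ha)).ne']
      exact ⟨ctr a, Metric.mem_ball_self (hradpos a (huE ha))⟩
  have hmem : ∀ a ∈ E, a ∈ Metric.closedBall (ctr a) (rad a) := by
    intro a ha
    rw [Metric.mem_closedBall, Real.dist_eq, abs_le]
    constructor <;> simp only [hctr, hrad] <;> [linarith [hU a ha]; linarith [hV a ha]]
  have hEsub : E ⊆ ⋃ b ∈ u, Metric.closedBall (ctr b) (4 * rad b) := by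
    intro a ha
    obtain ⟨b, hb, hsub⟩ := hcov a ha
    exact Set.mem_biUnion hb (hsub (hmem a ha))
  have hIoc : ∀ b ∈ u, Set.Ioc (U b) (V b) ⊆ Metric.closedBall (ctr b) (rad b) := by
    intro b hb y hy
    rw [Metric.mem_closedBall, Real.dist_eq, abs_le]
    obtain ⟨h1, h2⟩ := hy
    constructor <;> simp only [hctr, hrad] <;> linarith
  have key : ∀ b ∈ u, volume (Metric.closedBall (ctr b) (4 * rad b)) ≤
      ENNReal.ofReal (10 / μ') * ν (Metric.closedBall (ctr b) (rad b)) := by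
    intro b hb
    rw [Real.volume_closedBall]
    have h1 : ENNReal.ofReal (μ' * (V b - U b)) ≤ ν (Metric.closedBall (ctr b) (rad b)) :=
      le_trans (hν b (huE hb)) (measure_mono (hIoc b hb))
    calc ENNReal.ofReal (2 * (4 * rad b))
        ≤ ENNReal.ofReal ((10 / μ') * (μ' * (V b - U b))) := by
          apply ENNReal.ofReal_le_ofReal
          have : (10 / μ') * (μ' * (V b - U b)) = 10 * (V b - U b) := by
            field_simp
          rw [this, hrad]
          have := hUV b (huE hb)
          nlinarith
      _ = ENNReal.ofReal (10 / μ') * ENNReal.ofReal (μ' * (V b - U b)) := by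
          rw [ENNReal.ofReal_mul (by positivity)]
      _ ≤ ENNReal.ofReal (10 / μ') * ν (Metric.closedBall (ctr b) (rad b)) := by
          exact mul_le_mul_right h1 _
  calc volume E ≤ volume (⋃ b ∈ u, Metric.closedBall (ctr b) (4 * rad b)) :=
        measure_mono hEsub
    _ ≤ ∑' b : u, volume (Metric.closedBall (ctr (b : ℝ)) (4 * rad (b : ℝ))) :=
        measure_biUnion_le _ hucount _
    _ ≤ ∑' b : u, ENNReal.ofReal (10 / μ') * ν (Metric.closedBall (ctr (b : ℝ)) (rad (b : ℝ))) :=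
        ENNReal.tsum_le_tsum fun b => key b b.2
    _ = ENNReal.ofReal (10 / μ') * ∑' b : u, ν (Metric.closedBall (ctr (b : ℝ)) (rad (b : ℝ))) :=
        ENNReal.tsum_mul_left
    _ = ENNReal.ofReal (10 / μ') * ν (⋃ b ∈ u, Metric.closedBall (ctr b) (rad b)) := by
        rw [measure_biUnion hucount hdisj (fun b _ => measurableSet_closedBall)]
    _ ≤ ENNReal.ofReal (10 / μ') * ν Set.univ :=
        mul_le_mul_right (measure_mono (Set.subset_univ _)) _


lemma chain_pow (n : ℝ → ℕ) (r₀ K : ℝ) (hr₀ : 0 < r₀) (hK : 1 < K)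
    (hmono : ∀ u v : ℝ, u ≤ v → n u ≤ n v)
    (hdbl : ∀ r, r₀ ≤ r → (n (2 * r) : ℝ) ≤ K * n r) :
    ∀ k : ℕ, ∀ r t : ℝ, r₀ ≤ r → r ≤ t → t ≤ 2 ^ k * r → (n t : ℝ) ≤ K ^ k * n r := by
  intro k
  induction k with
  | zero =>
    intro r t hr hrt htr
    simp only [pow_zero, one_mul] at htr ⊢
    have : t = r := le_antisymm htr hrt
    rw [this]
  | succ k IH =>
    intro r t hr hrt htr
    have hrpos : 0 < r := hr₀.trans_le hr
    have hKpos : 0 < K := lt_trans one_pos hK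
    have h2k : (1:ℝ) ≤ 2 ^ k := one_le_pow₀ (by norm_num)
    by_cases hc : t ≤ 2 ^ k * r
    · have := IH r t hr hrt hc
      have hKk : K ^ k ≤ K ^ (k+1) := by
        apply pow_le_pow_right₀ hK.le
        omega
      have hnr : (0:ℝ) ≤ n r := Nat.cast_nonneg _
      nlinarith [pow_pos hKpos k]
    · push_neg at hc
      have h1 : (n t : ℝ) ≤ n (2 ^ (k+1) * r) := by
        exact_mod_cast Nat.cast_le.2 (hmono _ _ htr)
      have h2 : (2:ℝ) ^ (k+1) * r = 2 * (2 ^ k * r) := by ring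
      have h3 : r₀ ≤ 2 ^ k * r := le_trans hr (by nlinarith)
      have h4 : (n (2 ^ k * r) : ℝ) ≤ K ^ k * n r := IH r _ hr (by nlinarith) le_rfl
      have h5 : (n (2 ^ (k+1) * r) : ℝ) ≤ K * n (2 ^ k * r) := by
        rw [h2]; exact hdbl _ h3
      calc (n t : ℝ) ≤ K * n (2 ^ k * r) := h1.trans h5
        _ ≤ K * (K ^ k * n r) := by nlinarith
        _ = K ^ (k+1) * n r := by ring


lemma two_rpow_L (K : ℝ) (hK : 1 < K) :
    (2:ℝ) ^ (Real.log K / Real.log 2) = K := by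
  have h2 : (0:ℝ) < Real.log 2 := Real.log_pos (by norm_num)
  rw [Real.rpow_def_of_pos (by norm_num : (0:ℝ) < 2)]
  rw [mul_comm, div_mul_cancel₀ _ h2.ne']
  exact Real.exp_log (lt_trans one_pos hK)

lemma growth_bound (n : ℝ → ℕ) (r₀ K : ℝ) (hr₀ : 0 < r₀) (hK : 1 < K)
    (hmono : ∀ u v : ℝ, u ≤ v → n u ≤ n v)
    (hdbl : ∀ r, r₀ ≤ r → (n (2 * r) : ℝ) ≤ K * n r) :
    ∀ r t : ℝ, r₀ ≤ r → 2 * r ≤ t →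
      (n t : ℝ) ≤ (t / r) ^ (2 * (Real.log K / Real.log 2)) * n r := by
  intro r t hr h2r
  set L := Real.log K / Real.log 2 with hL
  have hrpos : 0 < r := hr₀.trans_le hr
  have htr2 : (2:ℝ) ≤ t / r := (le_div_iff₀ hrpos).2 (by linarith)
  have htrpos : (0:ℝ) < t / r := lt_of_lt_of_le two_pos htr2
  have hLpos : 0 < L := div_pos (Real.log_pos hK) (Real.log_pos (by norm_num))
  -- find minimal k with t ≤ 2^k * r
  have hex : ∃ k : ℕ, t ≤ 2 ^ k * r := by
    obtain ⟨k, hk⟩ := pow_unbounded_of_one_lt (t / r) (by norm_num : (1:ℝ) < 2)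
    exact ⟨k, by rw [← div_le_iff₀ hrpos] at *; exact hk.le⟩
  classical
  set k := Nat.find hex with hkdef
  have hkspec : t ≤ 2 ^ k * r := Nat.find_spec hex
  have hk1 : 1 ≤ k := by
    rcases Nat.eq_zero_or_pos k with h0 | h
    · exfalso
      rw [h0] at hkspec
      simp only [pow_zero, one_mul] at hkspec
      linarith
    · exact h
  have hmin : ¬ t ≤ 2 ^ (k-1) * r := Nat.find_min hex (by omega)
  push_neg at hmin
  have h2k2t : (2:ℝ) ^ k * r < 2 * t := by
    have : (2:ℝ) ^ k = 2 * 2 ^ (k-1) := by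
      rw [← pow_succ']
      congr 1
      omega
    rw [this]
    nlinarith
  -- K ^ k ≤ (t/r) ^ (2L)
  have hKk : (K : ℝ) ^ k ≤ (t / r) ^ (2 * L) := by
    have e1 : (K:ℝ) ^ k = ((2:ℝ) ^ L) ^ (k:ℕ) := by rw [two_rpow_L K hK]
    have e2 : ((2:ℝ) ^ L) ^ (k:ℕ) = ((2:ℝ) ^ (k:ℕ) : ℝ) ^ L := by
      rw [← Real.rpow_natCast ((2:ℝ) ^ L) k, ← Real.rpow_mul (by norm_num : (0:ℝ) ≤ 2),
        mul_comm, Real.rpow_mul (by norm_num : (0:ℝ) ≤ 2), Real.rpow_natCast]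
    have e3 : ((2:ℝ) ^ (k:ℕ)) ≤ (t / r) ^ (2:ℕ) := by
      have h2kle : (2:ℝ) ^ k < 2 * (t / r) := by
        rw [← mul_div_assoc]
        exact (lt_div_iff₀ hrpos).2 (by linarith)
      have : 2 * (t / r) ≤ (t / r) ^ (2:ℕ) := by nlinarith
      linarith
    have e4 : (((2:ℝ) ^ (k:ℕ)) : ℝ) ^ L ≤ ((t / r) ^ (2:ℕ) : ℝ) ^ L :=
      Real.rpow_le_rpow (by positivity) e3 hLpos.le
    have e5 : ((t / r) ^ (2:ℕ) : ℝ) ^ L = (t / r) ^ (2 * L) := by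
      rw [← Real.rpow_natCast (t/r) 2, ← Real.rpow_mul htrpos.le]
      norm_num
    rw [e1, e2]
    rw [e5] at e4
    exact e4
  have hchain := chain_pow n r₀ K hr₀ hK hmono hdbl k r t hr (by linarith) hkspec
  have hnr : (0:ℝ) ≤ n r := Nat.cast_nonneg _
  calc (n t : ℝ) ≤ K ^ k * n r := hchain
    _ ≤ (t / r) ^ (2 * L) * n r := by nlinarith

set_option maxHeartbeats 1000000

theorem measure_Fmu_inter (f : ℂ → ℂ)
    (hf : Differentiable ℂ f)
    (hfin : orderOfGrowth f < ⊤)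
    (hne : ∃ z, f z ≠ 0)
    (r₀ K : ℝ) (hr₀ : 0 < r₀) (hK : 1 < K)
    (hdbl : ∀ r, r₀ ≤ r → (countZeros f (2 * r) : ℝ) ≤ K * (countZeros f r : ℝ))
    (δ : ℝ) (hδ : 0 < δ) :
    ∃ μ > (0:ℝ), ∀ R, 2 * r₀ ≤ R →
      ENNReal.ofReal ((1 - δ) * R) ≤
        MeasureTheory.volume
          ({r : ℝ | r₀ ≤ r ∧
            (∀ t, r ≤ t → (countZeros f t : ℝ) ≤ (t / r) ^ μ * (countZeros f r : ℝ)) ∧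
            (∀ t, r₀ ≤ t → t ≤ r → (t / r) ^ μ * (countZeros f r : ℝ) ≤ (countZeros f t : ℝ))}
            ∩ Set.Icc R (2 * R)) := by
  classical
  obtain ⟨n, hn⟩ : ∃ n : ℝ → ℕ, n = countZeros f := ⟨_, rfl⟩
  have hmono : ∀ u v : ℝ, u ≤ v → n u ≤ n v := fun u v h => by
    rw [hn]; exact countZeros_mono hf hne h
  have hdbl' : ∀ r, r₀ ≤ r → (n (2 * r) : ℝ) ≤ K * (n r : ℝ) := fun r hr => by
    rw [hn]; exact hdbl r hr
  set L := Real.log K / Real.log 2 with hLdef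
  have hLpos : 0 < L := div_pos (Real.log_pos hK) (Real.log_pos (by norm_num))
  have hK3 : 0 < K ^ 3 - 1 := by nlinarith [sq_nonneg K, sq_nonneg (K - 1)]
  set μ := max (max 1 (2 * L)) (80 * (K ^ 3 - 1) / δ) with hμdef
  have hμ1 : 1 ≤ μ := le_trans (le_max_left _ _) (le_max_left _ _)
  have hμL : 2 * L ≤ μ := le_trans (le_max_right _ _) (le_max_left _ _)
  have hμδ : 80 * (K ^ 3 - 1) / δ ≤ μ := le_max_right _ _
  have hμpos : 0 < μ := lt_of_lt_of_le one_pos hμ1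
  refine ⟨μ, hμpos, ?_⟩
  intro R hR
  rw [← hn]
  have hRpos : 0 < R := lt_of_lt_of_le (by linarith) hR
  set Good : Set ℝ := {r : ℝ | r₀ ≤ r ∧
      (∀ t, r ≤ t → (n t : ℝ) ≤ (t / r) ^ μ * (n r : ℝ)) ∧
      (∀ t, r₀ ≤ t → t ≤ r → (t / r) ^ μ * (n r : ℝ) ≤ (n t : ℝ))} with hGoodDef
  rcases le_or_gt 1 δ with hδ1 | hδ1
  · have h0 : (1 - δ) * R ≤ 0 := by nlinarith
    rw [ENNReal.ofReal_eq_zero.2 h0]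
    exact zero_le
  -- now δ < 1
  by_cases hz : n r₀ = 0
  · -- trivial case: no zeros beyond r₀
    have hzero : ∀ t, r₀ ≤ t → n t = 0 := by
      intro t ht
      obtain ⟨k, hk⟩ := pow_unbounded_of_one_lt (t / r₀) (by norm_num : (1:ℝ) < 2)
      have hk' : t ≤ 2 ^ k * r₀ := by
        rw [div_lt_iff₀ hr₀] at hk
        linarith
      have := chain_pow n r₀ K hr₀ hK hmono hdbl' k r₀ t le_rfl ht hk'
      rw [hz] at this
      simp only [Nat.cast_zero, mul_zero] at this
      have h0 : (0:ℝ) ≤ (n t : ℝ) := Nat.cast_nonneg _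
      exact_mod_cast le_antisymm this h0
    have hsub : Set.Icc R (2 * R) ⊆ Good := by
      intro r hr
      have hrr₀ : r₀ ≤ r := by
        have := hr.1
        linarith
      refine ⟨hrr₀, ?_, ?_⟩
      · intro t ht
        rw [hzero t (hrr₀.trans ht), hzero r hrr₀]
        simp
      · intro t ht1 ht2
        rw [hzero r hrr₀]
        simp
    calc ENNReal.ofReal ((1 - δ) * R) ≤ ENNReal.ofReal (2 * R - R) := by
          apply ENNReal.ofReal_le_ofReal
          nlinarith
      _ = MeasureTheory.volume (Set.Icc R (2 * R)) := (Real.volume_Icc).symm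
      _ ≤ MeasureTheory.volume (Good ∩ Set.Icc R (2 * R)) := by
          apply MeasureTheory.measure_mono
          exact fun r hr => ⟨hsub hr, hr⟩
  -- main case
  have hna1 : 1 ≤ n (R / 2) := by
    have := hmono r₀ (R / 2) (by linarith)
    omega
  set na := n (R / 2) with hnadef
  have hnapos : (0:ℝ) < (na : ℝ) := by exact_mod_cast hna1
  -- the atomic measure supported on moduli of zeros in (R/2, 4R]
  set W := (annulus_finite hf hne (R / 2) (4 * R)).toFinset with hWdef
  set ν : MeasureTheory.Measure ℝ :=
    ∑ z ∈ W, (zeroMult f z : ℝ≥0∞) • MeasureTheory.Measure.dirac (‖z‖) with hνdef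
  have hνapp : ∀ s : Set ℝ, MeasurableSet s →
      ν s = ∑ z ∈ W, (zeroMult f z : ℝ≥0∞) * s.indicator 1 (‖z‖) := by
    intro s hs
    rw [hνdef, MeasureTheory.Measure.finset_sum_apply]
    apply Finset.sum_congr rfl
    intro z hzW
    rw [MeasureTheory.Measure.smul_apply, MeasureTheory.Measure.dirac_apply' _ hs, smul_eq_mul]
  have hIocν : ∀ u v : ℝ, R / 2 ≤ u → u ≤ v → v ≤ 4 * R →
      (n u : ℝ≥0∞) + ν (Set.Ioc u v) = (n v : ℝ≥0∞) := by
    intro u v h1 h2 h3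
    have hfinuv := annulus_finite hf hne u v
    have hadd := countZeros_add hf hne h2 rfl hfinuv
    have hν1 : ν (Set.Ioc u v) = ∑ z ∈ hfinuv.toFinset, (zeroMult f z : ℝ≥0∞) := by
      rw [hνapp _ measurableSet_Ioc]
      rw [← Finset.sum_filter_of_ne (p := fun z => ‖z‖ ∈ Set.Ioc u v)]
      · apply Finset.sum_congr
        · ext z
          simp only [Finset.mem_filter, hWdef, Set.Finite.mem_toFinset, Set.mem_setOf_eq,
            Set.mem_Ioc]
          constructor
          · rintro ⟨⟨hz0, -, -⟩, h5, h6⟩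
            exact ⟨hz0, h5, h6⟩
          · rintro ⟨hz0, h5, h6⟩
            exact ⟨⟨hz0, lt_of_le_of_lt h1 h5, h6.trans h3⟩, h5, h6⟩
        · intro z hzmem
          rw [Set.Finite.mem_toFinset] at hzmem
          rw [Set.indicator_of_mem (Set.mem_Ioc.2 ⟨hzmem.2.1, hzmem.2.2⟩), Pi.one_apply, mul_one]
      · intro z hzW hne0
        by_contra hmem
        rw [Set.indicator_of_notMem hmem, mul_zero] at hne0
        exact hne0 rfl
    rw [hν1, hn]
    rw [hadd]
    push_cast
    ring
  have hνuniv : ν Set.univ ≤ ENNReal.ofReal ((K ^ 3 - 1) * (na : ℝ)) := by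
    have h48 : (n (4 * R) : ℝ) ≤ K ^ 3 * (na : ℝ) := by
      have := chain_pow n r₀ K hr₀ hK hmono hdbl' 3 (R / 2) (4 * R)
        (by linarith) (by linarith) (by linarith [pow_succ (2:ℝ) 2])
      exact this
    have huniv : ν Set.univ = ν (Set.Ioc (R / 2) (4 * R)) := by
      rw [hνapp _ MeasurableSet.univ, hνapp _ measurableSet_Ioc]
      apply Finset.sum_congr rfl
      intro z hzW
      simp only [hWdef, Set.Finite.mem_toFinset, Set.mem_setOf_eq] at hzW
      rw [Set.indicator_of_mem (Set.mem_univ _), Set.indicator_of_mem]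
      exact ⟨hzW.2.1, hzW.2.2⟩
    have hkey := hIocν (R / 2) (4 * R) le_rfl (by linarith) le_rfl
    rw [huniv]
    have hle : ν (Set.Ioc (R / 2) (4 * R)) ≤ ENNReal.ofReal ((K ^ 3 - 1) * (na : ℝ)) := by
      rw [← ENNReal.add_le_add_iff_right (ENNReal.natCast_ne_top na)]
      calc ν (Set.Ioc (R / 2) (4 * R)) + (na : ℝ≥0∞) = (n (4 * R) : ℝ≥0∞) := by
            rw [add_comm]; exact hkey
        _ = ENNReal.ofReal ((n (4 * R) : ℝ)) := by rw [ENNReal.ofReal_natCast]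
        _ ≤ ENNReal.ofReal ((K ^ 3 - 1) * (na : ℝ) + (na : ℝ)) := by
            apply ENNReal.ofReal_le_ofReal
            nlinarith
        _ = ENNReal.ofReal ((K ^ 3 - 1) * (na : ℝ)) + ENNReal.ofReal ((na : ℝ)) := by
            rw [ENNReal.ofReal_add (by positivity) (by positivity)]
        _ = ENNReal.ofReal ((K ^ 3 - 1) * (na : ℝ)) + (na : ℝ≥0∞) := by
            rw [ENNReal.ofReal_natCast]
    exact hle
  -- bad sets
  set Bp : Set ℝ := {r : ℝ | r ∈ Set.Icc R (2*R) ∧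
      ∃ t, r < t ∧ t < 2*r ∧ (t/r) ^ μ * (n r : ℝ) < (n t : ℝ)} with hBpDef
  set Bm : Set ℝ := {r : ℝ | r ∈ Set.Icc R (2*R) ∧
      ∃ t, r/2 < t ∧ t < r ∧ (n t : ℝ) < (t/r) ^ μ * (n r : ℝ)} with hBmDef
  set μ' := μ * (na : ℝ) / (2*R) with hμ'def
  have hμ'pos : 0 < μ' := div_pos (mul_pos hμpos hnapos) (by linarith)
  have hbern : ∀ x y : ℝ, 0 < x → x ≤ y → 1 + μ * ((y - x)/x) ≤ (y/x) ^ μ := by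
    intro x y hx hxy
    have hs : (0:ℝ) ≤ (y - x)/x := div_nonneg (by linarith) hx.le
    have hb := one_add_mul_self_le_rpow_one_add (by linarith : (-1:ℝ) ≤ (y - x)/x) hμ1
    have hyx : 1 + (y - x)/x = y/x := by field_simp; ring
    rwa [hyx] at hb
  have hBpcov : ∀ r ∈ Bp, ∃ u v : ℝ, u ≤ r ∧ r ≤ v ∧ u < v ∧ v - u ≤ 2*R ∧
      ENNReal.ofReal (μ' * (v - u)) ≤ ν (Set.Ioc u v) := by
    intro r hr
    rw [hBpDef] at hr
    simp only [Set.mem_setOf_eq] at hr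
    obtain ⟨⟨hr1, hr2⟩, t, ht1, ht2, ht3⟩ := hr
    refine ⟨r, t, le_rfl, ht1.le, ht1, by linarith, ?_⟩
    have hrpos : 0 < r := by linarith
    have hreal : μ' * (t - r) + (n r : ℝ) ≤ (n t : ℝ) := by
      have hb := hbern r t hrpos ht1.le
      have hnrna : (na : ℝ) ≤ (n r : ℝ) := by
        exact_mod_cast hmono (R/2) r (by linarith)
      have h1 : (1 + μ * ((t - r)/r)) * (n r : ℝ) ≤ (t/r) ^ μ * (n r : ℝ) :=
        mul_le_mul_of_nonneg_right hb (Nat.cast_nonneg _)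
      have h2 : μ' * (t - r) ≤ μ * ((t - r)/r) * (n r : ℝ) := by
        rw [hμ'def]
        have e1 : μ * (na:ℝ) / (2*R) * (t - r) = (μ * (t - r)) * ((na:ℝ) / (2*R)) := by ring
        have e2 : μ * ((t - r)/r) * (n r : ℝ) = (μ * (t - r)) * ((n r : ℝ) / r) := by ring
        rw [e1, e2]
        apply mul_le_mul_of_nonneg_left _ (by nlinarith : (0:ℝ) ≤ μ * (t - r))
        exact div_le_div₀ (Nat.cast_nonneg _) hnrna hrpos (by linarith)
      nlinarith
    have hIoc := hIocν r t (by linarith) ht1.le (by linarith)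
    rw [← ENNReal.add_le_add_iff_right (ENNReal.natCast_ne_top (n r))]
    calc ENNReal.ofReal (μ' * (t - r)) + (n r : ℝ≥0∞)
        = ENNReal.ofReal (μ' * (t - r)) + ENNReal.ofReal ((n r : ℝ)) := by
          rw [ENNReal.ofReal_natCast]
      _ = ENNReal.ofReal (μ' * (t - r) + (n r : ℝ)) :=
          (ENNReal.ofReal_add (mul_nonneg hμ'pos.le (by linarith)) (Nat.cast_nonneg _)).symm
      _ ≤ ENNReal.ofReal ((n t : ℝ)) := ENNReal.ofReal_le_ofReal hreal
      _ = (n t : ℝ≥0∞) := ENNReal.ofReal_natCast _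
      _ = ν (Set.Ioc r t) + (n r : ℝ≥0∞) := by rw [add_comm]; exact hIoc.symm
  have hBmcov : ∀ r ∈ Bm, ∃ u v : ℝ, u ≤ r ∧ r ≤ v ∧ u < v ∧ v - u ≤ 2*R ∧
      ENNReal.ofReal (μ' * (v - u)) ≤ ν (Set.Ioc u v) := by
    intro r hr
    rw [hBmDef] at hr
    simp only [Set.mem_setOf_eq] at hr
    obtain ⟨⟨hr1, hr2⟩, t, ht1, ht2, ht3⟩ := hr
    refine ⟨t, r, ht2.le, le_rfl, ht2, by linarith, ?_⟩
    have htpos : 0 < t := by linarith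
    have hrpos : 0 < r := by linarith
    have hreal : μ' * (r - t) + (n t : ℝ) ≤ (n r : ℝ) := by
      have hb := hbern t r htpos ht2.le
      have hntna : (na : ℝ) ≤ (n t : ℝ) := by
        exact_mod_cast hmono (R/2) t (by linarith)
      have hprod : (r/t) ^ μ * (t/r) ^ μ = 1 := by
        rw [← Real.mul_rpow (by positivity) (by positivity),
          show r/t*(t/r) = 1 by field_simp, Real.one_rpow]
      have h3 : (r/t) ^ μ * (n t : ℝ) < (n r : ℝ) := by
        have hpos : (0:ℝ) < (r/t) ^ μ := Real.rpow_pos_of_pos (by positivity) μ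
        calc (r/t) ^ μ * (n t : ℝ) < (r/t) ^ μ * ((t/r) ^ μ * (n r : ℝ)) :=
              mul_lt_mul_of_pos_left ht3 hpos
          _ = ((r/t) ^ μ * (t/r) ^ μ) * (n r : ℝ) := by ring
          _ = (n r : ℝ) := by rw [hprod, one_mul]
      have h1 : (1 + μ * ((r - t)/t)) * (n t : ℝ) ≤ (r/t) ^ μ * (n t : ℝ) :=
        mul_le_mul_of_nonneg_right hb (Nat.cast_nonneg _)
      have h2 : μ' * (r - t) ≤ μ * ((r - t)/t) * (n t : ℝ) := by
        rw [hμ'def]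
        have e1 : μ * (na:ℝ) / (2*R) * (r - t) = (μ * (r - t)) * ((na:ℝ) / (2*R)) := by ring
        have e2 : μ * ((r - t)/t) * (n t : ℝ) = (μ * (r - t)) * ((n t : ℝ) / t) := by ring
        rw [e1, e2]
        apply mul_le_mul_of_nonneg_left _ (by nlinarith : (0:ℝ) ≤ μ * (r - t))
        exact div_le_div₀ (Nat.cast_nonneg _) hntna htpos (by linarith)
      nlinarith
    have hIoc := hIocν t r (by linarith) ht2.le (by linarith)
    rw [← ENNReal.add_le_add_iff_right (ENNReal.natCast_ne_top (n t))]
    calc ENNReal.ofReal (μ' * (r - t)) + (n t : ℝ≥0∞)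
        = ENNReal.ofReal (μ' * (r - t)) + ENNReal.ofReal ((n t : ℝ)) := by
          rw [ENNReal.ofReal_natCast]
      _ = ENNReal.ofReal (μ' * (r - t) + (n t : ℝ)) :=
          (ENNReal.ofReal_add (mul_nonneg hμ'pos.le (by linarith)) (Nat.cast_nonneg _)).symm
      _ ≤ ENNReal.ofReal ((n r : ℝ)) := ENNReal.ofReal_le_ofReal hreal
      _ = (n r : ℝ≥0∞) := ENNReal.ofReal_natCast _
      _ = ν (Set.Ioc t r) + (n t : ℝ≥0∞) := by rw [add_comm]; exact hIoc.symm
  -- bound the measures of the bad sets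
  have hquarter : 10 / μ' * ((K ^ 3 - 1) * (na : ℝ)) ≤ δ * R / 4 := by
    have e0 : 10 / μ' * ((K ^ 3 - 1) * (na : ℝ)) = 20 * R * (K ^ 3 - 1) / μ := by
      rw [hμ'def]
      field_simp
      ring
    rw [e0, div_le_iff₀ hμpos]
    have e : δ * R / 4 * (80 * (K ^ 3 - 1) / δ) = 20 * R * (K ^ 3 - 1) := by
      field_simp
      ring
    calc 20 * R * (K ^ 3 - 1) = δ * R / 4 * (80 * (K ^ 3 - 1) / δ) := e.symm
      _ ≤ δ * R / 4 * μ := mul_le_mul_of_nonneg_left hμδ (by positivity)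
  have hvolB : ∀ B : Set ℝ, (∀ r ∈ B, ∃ u v : ℝ, u ≤ r ∧ r ≤ v ∧ u < v ∧ v - u ≤ 2*R ∧
      ENNReal.ofReal (μ' * (v - u)) ≤ ν (Set.Ioc u v)) →
      MeasureTheory.volume B ≤ ENNReal.ofReal (δ * R / 4) := by
    intro B hB
    refine le_trans (covering_bound ν B (2*R) μ' hμ'pos hB) ?_
    calc ENNReal.ofReal (10 / μ') * ν Set.univ
        ≤ ENNReal.ofReal (10 / μ') * ENNReal.ofReal ((K ^ 3 - 1) * (na : ℝ)) :=
          mul_le_mul_right hνuniv _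
      _ = ENNReal.ofReal (10 / μ' * ((K ^ 3 - 1) * (na : ℝ))) :=
          (ENNReal.ofReal_mul (by positivity)).symm
      _ ≤ ENNReal.ofReal (δ * R / 4) := ENNReal.ofReal_le_ofReal hquarter
  have hvolBp := hvolB Bp hBpcov
  have hvolBm := hvolB Bm hBmcov
  -- good set inclusion
  have hGoodIncl : ∀ r, r ∈ Set.Icc R (2*R) → r ∉ Bp → r ∉ Bm → r ∈ Good := by
    intro r hrIcc hbp hbm
    obtain ⟨hr1, hr2⟩ := hrIcc
    have hrpos : 0 < r := by linarith
    have hrr₀ : r₀ ≤ r := by linarith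
    have hnotp : ∀ t, r < t → t < 2*r → (n t : ℝ) ≤ (t/r) ^ μ * (n r : ℝ) := by
      intro t h1 h2
      by_contra hcon
      push_neg at hcon
      exact hbp (by rw [hBpDef]; exact ⟨⟨hr1, hr2⟩, t, h1, h2, hcon⟩)
    have hnotm : ∀ t, r/2 < t → t < r → (t/r) ^ μ * (n r : ℝ) ≤ (n t : ℝ) := by
      intro t h1 h2
      by_contra hcon
      push_neg at hcon
      exact hbm (by rw [hBmDef]; exact ⟨⟨hr1, hr2⟩, t, h1, h2, hcon⟩)
    refine ⟨hrr₀, ?_, ?_⟩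
    · intro t ht
      rcases eq_or_lt_of_le ht with rfl | hlt
      · rw [div_self hrpos.ne', Real.one_rpow, one_mul]
      · rcases lt_or_ge t (2*r) with hcase | hcase
        · exact hnotp t hlt hcase
        · have hg := growth_bound n r₀ K hr₀ hK hmono hdbl' r t hrr₀ hcase
          have htr1 : (1:ℝ) ≤ t/r := by
            rw [le_div_iff₀ hrpos]
            linarith
          have hexp : (t/r) ^ (2 * L) ≤ (t/r) ^ μ :=
            Real.rpow_le_rpow_of_exponent_le htr1 hμL
          calc (n t : ℝ) ≤ (t/r) ^ (2 * L) * (n r : ℝ) := hg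
            _ ≤ (t/r) ^ μ * (n r : ℝ) := mul_le_mul_of_nonneg_right hexp (Nat.cast_nonneg _)
    · intro t ht1 ht2
      rcases eq_or_lt_of_le ht2 with rfl | hlt
      · rw [div_self hrpos.ne', Real.one_rpow, one_mul]
      · rcases lt_or_ge (r/2) t with hcase | hcase
        · exact hnotm t hcase hlt
        · have htpos : 0 < t := by linarith
          have hg := growth_bound n r₀ K hr₀ hK hmono hdbl' t r ht1 (by linarith)
          have hrt1 : (1:ℝ) ≤ r/t := by
            rw [le_div_iff₀ htpos]
            linarith
          have hexp : (r/t) ^ (2 * L) ≤ (r/t) ^ μ :=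
            Real.rpow_le_rpow_of_exponent_le hrt1 hμL
          have h4 : (n r : ℝ) ≤ (r/t) ^ μ * (n t : ℝ) :=
            hg.trans (mul_le_mul_of_nonneg_right hexp (Nat.cast_nonneg _))
          have hprod : (t/r) ^ μ * (r/t) ^ μ = 1 := by
            rw [← Real.mul_rpow (by positivity) (by positivity),
              show t/r*(r/t) = 1 by field_simp, Real.one_rpow]
          have hpos2 : (0:ℝ) ≤ (t/r) ^ μ := (Real.rpow_pos_of_pos (by positivity) μ).le
          calc (t/r) ^ μ * (n r : ℝ) ≤ (t/r) ^ μ * ((r/t) ^ μ * (n t : ℝ)) :=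
                mul_le_mul_of_nonneg_left h4 hpos2
            _ = ((t/r) ^ μ * (r/t) ^ μ) * (n t : ℝ) := by ring
            _ = (n t : ℝ) := by rw [hprod, one_mul]
  -- final combination
  have hcover : Set.Icc R (2*R) ⊆ (Good ∩ Set.Icc R (2*R)) ∪ (Bp ∪ Bm) := by
    intro r hr
    by_cases hbp : r ∈ Bp
    · exact Or.inr (Or.inl hbp)
    by_cases hbm : r ∈ Bm
    · exact Or.inr (Or.inr hbm)
    exact Or.inl ⟨hGoodIncl r hr hbp hbm, hr⟩
  have hmain : ENNReal.ofReal R ≤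
      MeasureTheory.volume (Good ∩ Set.Icc R (2*R)) + ENNReal.ofReal (δ * R / 2) := by
    calc ENNReal.ofReal R = MeasureTheory.volume (Set.Icc R (2*R)) := by
          rw [Real.volume_Icc]
          congr 1
          ring
      _ ≤ MeasureTheory.volume ((Good ∩ Set.Icc R (2*R)) ∪ (Bp ∪ Bm)) :=
          MeasureTheory.measure_mono hcover
      _ ≤ MeasureTheory.volume (Good ∩ Set.Icc R (2*R)) + MeasureTheory.volume (Bp ∪ Bm) :=
          MeasureTheory.measure_union_le _ _
      _ ≤ MeasureTheory.volume (Good ∩ Set.Icc R (2*R)) +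
            (MeasureTheory.volume Bp + MeasureTheory.volume Bm) :=
          add_le_add le_rfl (MeasureTheory.measure_union_le _ _)
      _ ≤ MeasureTheory.volume (Good ∩ Set.Icc R (2*R)) +
            (ENNReal.ofReal (δ * R / 4) + ENNReal.ofReal (δ * R / 4)) :=
          add_le_add le_rfl (add_le_add hvolBp hvolBm)
      _ = MeasureTheory.volume (Good ∩ Set.Icc R (2*R)) + ENNReal.ofReal (δ * R / 2) := by
          rw [← ENNReal.ofReal_add (by positivity) (by positivity)]
          congr 1
          ring
  have hfinal2 : ENNReal.ofReal ((1 - δ) * R) + ENNReal.ofReal (δ * R / 2) ≤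
      MeasureTheory.volume (Good ∩ Set.Icc R (2*R)) + ENNReal.ofReal (δ * R / 2) := by
    refine le_trans ?_ hmain
    rw [← ENNReal.ofReal_add (by nlinarith) (by positivity)]
    apply ENNReal.ofReal_le_ofReal
    nlinarith
  exact (ENNReal.add_le_add_iff_right ENNReal.ofReal_ne_top).1 hfinal2
end

section
/- Let f be a transcendental entire function for which there exist constants A, B, C, r₀ > 1 such that A·log M(r,f) ≤ log M(Cr,f) ≤ B·log M(r,f) for all r ≥ r₀. Let α₁, α₂, η > 0 and q, λ ≥ 0 be such that dens(T(f,α₁,α₂,q,λ), A(R)) > η for all large R, let μ > 0, and set t(R) = 2μR/(α₁·log M(R,f)). Then for all sufficiently large R there exist a positive integer m(R) ≥ (η/2)·(R/t(R))² and points a₁, …, a_{m(R)} ∈ T(f,α₁,α₂,q,λ) ∩ A(R) such that D(a_j, t(R)) ⊂ A(R) for all j and D(a_j, t(R)) ∩ D(a_k, t(R)) = ∅ for j ≠ k. -/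
open scoped ENNReal

/-- The closed annulus `A(R) = {z : R ≤ |z| ≤ 2R}`. -/
def annulus (R : ℝ) : Set ℂ := {z | R ≤ ‖z‖ ∧ ‖z‖ ≤ 2 * R}

/-- The density of `X` in `Y`: `area(X ∩ Y)/area(Y)`. -/
noncomputable def densIn (X Y : Set ℂ) : ℝ :=
  (MeasureTheory.volume (X ∩ Y)).toReal / (MeasureTheory.volume Y).toReal

/-- The set `T(f,α₁,α₂,q,λ)` of points `z` satisfying
(i) `α₁ log M(|z|,f) ≤ |z f'(z)/f(z)| ≤ α₂ log M(|z|,f)`;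
(ii) `|f(z)| ≥ |z|^q`; and
(iii) `|ζ f'(ζ)/f(ζ)| ≤ α₂ log M(|ζ|,f)` for `|ζ - z| ≤ λ |z| / log M(|z|,f)`. -/
noncomputable def Tset (f : ℂ → ℂ) (α₁ α₂ q lam : ℝ) : Set ℂ :=
  {z | (α₁ * Real.log (maxMod f (‖z‖)) ≤ ‖z * deriv f z / f z‖) ∧
       (‖z * deriv f z / f z‖ ≤ α₂ * Real.log (maxMod f (‖z‖))) ∧
       (‖z‖ ^ q ≤ ‖f z‖) ∧
       (∀ ζ : ℂ, ‖ζ - z‖ ≤ lam * ‖z‖ / Real.log (maxMod f (‖z‖)) →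
         ‖ζ * deriv f ζ / f ζ‖ ≤ α₂ * Real.log (maxMod f (‖ζ‖)))}

section Aux
open MeasureTheory
open scoped ENNReal NNReal

lemma maxMod_bddAbove (f : ℂ → ℂ) (hf : Continuous f) (r : ℝ) :
    BddAbove ((fun z => ‖f z‖) '' Metric.sphere (0 : ℂ) r) :=
  ((isCompact_sphere (0:ℂ) r).image (continuous_norm.comp hf)).bddAbove

lemma le_maxMod (f : ℂ → ℂ) (hf : Continuous f) (z : ℂ) :
    ‖f z‖ ≤ maxMod f (‖z‖) := by
  apply le_csSup (maxMod_bddAbove f hf _)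
  exact ⟨z, by simp, rfl⟩

lemma maxMod_mono (f : ℂ → ℂ) (hf : Differentiable ℂ f) {r r' : ℝ} (h0 : 0 ≤ r) (h : r ≤ r') :
    maxMod f r ≤ maxMod f r' := by
  rcases eq_or_lt_of_le h with rfl | hlt
  · exact le_rfl
  have hr' : 0 < r' := lt_of_le_of_lt h0 hlt
  apply csSup_le
  · exact ((NormedSpace.sphere_nonempty.2 h0).image _)
  rintro x ⟨z, hz, rfl⟩
  have hzr : ‖z‖ = r := by simpa [Complex.dist_eq] using hz
  have : ‖f z‖ ≤ maxMod f r' := by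
    apply Complex.norm_le_of_forall_mem_frontier_norm_le (U := Metric.ball (0:ℂ) r')
      Metric.isBounded_ball (hf.diffContOnCl)
    · intro w hw
      rw [frontier_ball _ (ne_of_gt hr')] at hw
      exact le_csSup (maxMod_bddAbove f hf.continuous _) ⟨w, hw, rfl⟩
    · rw [closure_ball _ (ne_of_gt hr')]
      rw [Metric.mem_closedBall, Complex.dist_eq, sub_zero, hzr]
      exact h
  simpa using this

lemma maxMod_unbounded (f : ℂ → ℂ) (hf : Differentiable ℂ f)
    (htrans : ¬ ∃ p : Polynomial ℂ, ∀ z, f z = p.eval z) (K r₁ : ℝ) :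
    ∃ r, r₁ ≤ r ∧ K ≤ maxMod f r := by
  by_contra hcon
  push_neg at hcon
  apply htrans
  have hb : ∀ z : ℂ, ‖f z‖ ≤ K := by
    intro z
    have h1 : ‖f z‖ ≤ maxMod f (‖z‖) := le_maxMod f hf.continuous z
    have h2 : maxMod f (‖z‖) ≤ maxMod f (max (‖z‖) r₁) :=
      maxMod_mono f hf (norm_nonneg z) (le_max_left _ _)
    have h3 : maxMod f (max (‖z‖) r₁) < K := hcon _ (le_max_right _ _)
    exact (lt_of_le_of_lt (h1.trans h2) h3).le
  obtain ⟨c, hc⟩ := hf.exists_const_forall_eq_of_bounded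
    (isBounded_iff_forall_norm_le.2 ⟨K, by rintro y ⟨z, rfl⟩; exact hb z⟩)
  exact ⟨Polynomial.C c, fun z => by simp [hc z]⟩

lemma log_maxMod_large (f : ℂ → ℂ) (hf : Differentiable ℂ f)
    (htrans : ¬ ∃ p : Polynomial ℂ, ∀ z, f z = p.eval z)
    (A C r₀ : ℝ) (hA : 1 < A) (hC : 1 < C) (hr₀ : 1 < r₀)
    (hreg : ∀ r, r₀ ≤ r → A * Real.log (maxMod f r) ≤ Real.log (maxMod f (C * r)))
    (K : ℝ) : ∃ R₂ : ℝ, ∀ R, R₂ ≤ R → K ≤ Real.log (maxMod f R) := by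
  obtain ⟨r₁, hr₁, hM⟩ := maxMod_unbounded f hf htrans (Real.exp 1) (max r₀ 1)
  have hr₁1 : (1:ℝ) ≤ r₁ := (le_max_right r₀ 1).trans hr₁
  have hr₁r₀ : r₀ ≤ r₁ := (le_max_left r₀ 1).trans hr₁
  have hr₁0 : (0:ℝ) ≤ r₁ := zero_le_one.trans hr₁1
  have hMpos : 0 < maxMod f r₁ := lt_of_lt_of_le (Real.exp_pos 1) hM
  have hC0 : (0:ℝ) < C := lt_trans zero_lt_one hC
  have claim : ∀ n : ℕ, ∀ R, C ^ n * r₁ ≤ R → (A ^ n : ℝ) ≤ Real.log (maxMod f R) := by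
    intro n
    induction n with
    | zero =>
      intro R hR
      simp only [pow_zero, one_mul] at hR ⊢
      have h1 : Real.exp 1 ≤ maxMod f R := hM.trans (maxMod_mono f hf hr₁0 hR)
      calc (1:ℝ) = Real.log (Real.exp 1) := (Real.log_exp 1).symm
        _ ≤ Real.log (maxMod f R) := Real.log_le_log (Real.exp_pos 1) h1
    | succ n ih =>
      intro R hR
      have hpow : (1:ℝ) ≤ C ^ n := one_le_pow₀ hC.le
      have hrge : C ^ n * r₁ ≤ R / C := by
        rw [le_div_iff₀ hC0]
        calc C ^ n * r₁ * C = C ^ (n+1) * r₁ := by ring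
          _ ≤ R := hR
      have hr₀r : r₀ ≤ R / C := by
        calc r₀ ≤ r₁ := hr₁r₀
          _ ≤ C ^ n * r₁ := le_mul_of_one_le_left hr₁0 hpow
          _ ≤ R / C := hrge
      have hstep := hreg (R / C) hr₀r
      rw [mul_div_cancel₀ R hC0.ne'] at hstep
      calc (A ^ (n+1) : ℝ) = A * A ^ n := by ring
        _ ≤ A * Real.log (maxMod f (R / C)) := by
            exact mul_le_mul_of_nonneg_left (ih _ hrge) (le_of_lt (lt_trans zero_lt_one hA))
        _ ≤ Real.log (maxMod f R) := hstep
  obtain ⟨n, hn⟩ := pow_unbounded_of_one_lt K hA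
  exact ⟨C ^ n * r₁, fun R hR => hn.le.trans (claim n R hR)⟩


lemma floor_sep {s u v : ℝ} (hs : 0 < s) (h : ⌊u / s⌋ + 2 ≤ ⌊v / s⌋) : s ≤ v - u := by
  have h1 : u / s < (⌊u / s⌋ : ℝ) + 1 := Int.lt_floor_add_one _
  have h2 : ((⌊v / s⌋ : ℝ)) ≤ v / s := Int.floor_le _
  have h3 : ((⌊u / s⌋ : ℝ)) + 2 ≤ (⌊v / s⌋ : ℝ) := by exact_mod_cast h
  have h4 : u / s + 1 ≤ v / s := by linarith
  have h5 : (u + s) / s ≤ v / s := by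
    rw [add_div, div_self hs.ne']; linarith
  rw [div_le_div_iff_of_pos_right hs] at h5
  linarith

/-- square with index p, side s -/
def gsq (s : ℝ) (p : ℤ × ℤ) : Set ℂ := {z | ⌊z.re / s⌋ = p.1 ∧ ⌊z.im / s⌋ = p.2}

lemma mem_gsq_self (s : ℝ) (z : ℂ) : z ∈ gsq s (⌊z.re / s⌋, ⌊z.im / s⌋) := ⟨rfl, rfl⟩

lemma gsq_volume {s : ℝ} (hs : 0 < s) (p : ℤ × ℤ) :
    volume (gsq s p) = ENNReal.ofReal (s * s) := by
  have heq : gsq s p = Complex.measurableEquivRealProd ⁻¹'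
      (Set.Ico ((p.1 : ℝ) * s) (((p.1 : ℝ) + 1) * s) ×ˢ
       Set.Ico ((p.2 : ℝ) * s) (((p.2 : ℝ) + 1) * s)) := by
    ext z
    simp only [gsq, Set.mem_setOf_eq, Set.mem_preimage,
      Complex.measurableEquivRealProd_apply, Set.mem_prod, Set.mem_Ico]
    rw [Int.floor_eq_iff (R := ℝ), Int.floor_eq_iff (R := ℝ)]
    rw [le_div_iff₀ hs, div_lt_iff₀ hs, le_div_iff₀ hs, div_lt_iff₀ hs]
  rw [heq, Complex.volume_preserving_equiv_real_prod.measure_preimage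
    ((measurableSet_Ico.prod measurableSet_Ico).nullMeasurableSet)]
  rw [Measure.volume_eq_prod, Measure.prod_prod, Real.volume_Ico, Real.volume_Ico]
  have : ((p.1 : ℝ) + 1) * s - (p.1 : ℝ) * s = s := by ring
  have h2 : ((p.2 : ℝ) + 1) * s - (p.2 : ℝ) * s = s := by ring
  rw [this, h2, ← ENNReal.ofReal_mul hs.le]

lemma gsq_sep {t : ℝ} (ht : 0 < t) {p p' : ℤ × ℤ}
    (hpar1 : p.1 % 2 = p'.1 % 2) (hpar2 : p.2 % 2 = p'.2 % 2) (hne : p ≠ p')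
    {x y : ℂ} (hx : x ∈ gsq (2*t) p) (hy : y ∈ gsq (2*t) p') : 2*t ≤ dist x y := by
  have hs : (0:ℝ) < 2*t := by linarith
  have key : ∀ u v : ℝ, ⌊u / (2*t)⌋ + 2 ≤ ⌊v / (2*t)⌋ → 2*t ≤ |u - v| := by
    intro u v h
    have := floor_sep hs h
    rw [abs_sub_comm, abs_of_nonneg (by linarith)]
    linarith
  have hre : ∀ w : ℂ, |w.re - y.re| ≤ dist w y := by
    intro w
    rw [Complex.dist_eq, ← Complex.sub_re]
    exact Complex.abs_re_le_norm _
  have hne' : p.1 ≠ p'.1 ∨ p.2 ≠ p'.2 := by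
    by_contra hcc
    push_neg at hcc
    exact hne (Prod.ext hcc.1 hcc.2)
  rcases hne' with h1 | h2
  · have : p.1 + 2 ≤ p'.1 ∨ p'.1 + 2 ≤ p.1 := by omega
    rcases this with h | h
    · have := key x.re y.re (by rw [hx.1, hy.1]; exact h)
      exact this.trans (hre x)
    · have := key y.re x.re (by rw [hx.1, hy.1]; exact h)
      rw [abs_sub_comm] at this
      exact this.trans (hre x)
  · have him : |x.im - y.im| ≤ dist x y := by
      rw [Complex.dist_eq, ← Complex.sub_im]
      exact Complex.abs_im_le_norm _
    have : p.2 + 2 ≤ p'.2 ∨ p'.2 + 2 ≤ p.2 := by omega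
    rcases this with h | h
    · exact (key x.im y.im (by rw [hx.2, hy.2]; exact h)).trans him
    · have := key y.im x.im (by rw [hx.2, hy.2]; exact h)
      rw [abs_sub_comm] at this
      exact this.trans him

lemma grid_packing (S : Set ℂ) (ρ t : ℝ) (ht : 0 < t) (hS : S ⊆ Metric.closedBall 0 ρ) :
    ∃ (m : ℕ) (a : Fin m → ℂ), (∀ j, a j ∈ S) ∧
      (∀ j k, j ≠ k → 2*t ≤ dist (a j) (a k)) ∧
      (MeasureTheory.volume S).toReal ≤ m * (16 * t^2) := by
  classical
  rcases S.eq_empty_or_nonempty with rfl | ⟨z₀, hz₀⟩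
  · exact ⟨0, fun j => j.elim0, fun j => j.elim0, fun j => j.elim0, by simp⟩
  set s : ℝ := 2*t with hs_def
  have hs : (0:ℝ) < s := by positivity
  have hρ : 0 ≤ ρ := le_trans (norm_nonneg z₀) (by simpa [Complex.dist_eq] using hS hz₀)
  set N : ℕ := ⌈ρ / s⌉₊ with hN
  set B : Finset (ℤ × ℤ) := Finset.Icc (-(N:ℤ)) N ×ˢ Finset.Icc (-(N:ℤ)) N with hB
  set I : Finset (ℤ × ℤ) := B.filter (fun p => (gsq s p ∩ S).Nonempty) with hI
  -- every point of S is in a square indexed by I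
  have hmemB : ∀ z ∈ S, (⌊z.re / s⌋, ⌊z.im / s⌋) ∈ B := by
    intro z hz
    have habs : ‖z‖ ≤ ρ := by simpa [Complex.dist_eq] using hS hz
    have hbound : ∀ u : ℝ, |u| ≤ ‖z‖ → -(N:ℤ) ≤ ⌊u / s⌋ ∧ ⌊u / s⌋ ≤ N := by
      intro u hu
      have h1 : -ρ ≤ u := by
        have := abs_le.mp (hu.trans habs); linarith [this.1]
      have h2 : u ≤ ρ := (le_abs_self u).trans (hu.trans habs)
      have hρN : ρ / s ≤ N := Nat.le_ceil _
      have hρN' : ρ ≤ N * s := by rw [div_le_iff₀ hs] at hρN; linarith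
      constructor
      · rw [Int.le_floor]
        push_cast
        rw [le_div_iff₀ hs]
        linarith
      · have : ⌊u / s⌋ ≤ ⌊(N:ℝ)⌋ := by
          apply Int.floor_le_floor
          rw [div_le_iff₀ hs]
          linarith
        simpa using this
    have hre := hbound z.re (Complex.abs_re_le_norm z)
    have him := hbound z.im (Complex.abs_im_le_norm z)
    simp only [hB, Finset.mem_product, Finset.mem_Icc]
    exact ⟨⟨hre.1, hre.2⟩, ⟨him.1, him.2⟩⟩
  have hcover : S ⊆ ⋃ p ∈ I, gsq s p := by
    intro z hz
    have hpI : (⌊z.re / s⌋, ⌊z.im / s⌋) ∈ I := by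
      rw [hI, Finset.mem_filter]
      exact ⟨hmemB z hz, ⟨z, mem_gsq_self s z, hz⟩⟩
    exact Set.mem_biUnion hpI (mem_gsq_self s z)
  -- volume bound
  have hvol : (MeasureTheory.volume S).toReal ≤ I.card * (s * s) := by
    have h1 : MeasureTheory.volume S ≤ (I.card : ℝ≥0∞) * ENNReal.ofReal (s * s) := by
      calc MeasureTheory.volume S ≤ MeasureTheory.volume (⋃ p ∈ I, gsq s p) :=
            measure_mono hcover
        _ ≤ ∑ p ∈ I, MeasureTheory.volume (gsq s p) := measure_biUnion_finset_le I _
        _ = (I.card : ℝ≥0∞) * ENNReal.ofReal (s * s) := by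
            rw [Finset.sum_congr rfl (fun p _ => gsq_volume hs p), Finset.sum_const,
              nsmul_eq_mul]
    have h2 : ((I.card : ℝ≥0∞) * ENNReal.ofReal (s * s)).toReal = I.card * (s * s) := by
      rw [ENNReal.toReal_mul, ENNReal.toReal_natCast, ENNReal.toReal_ofReal (by positivity)]
    calc (MeasureTheory.volume S).toReal
        ≤ ((I.card : ℝ≥0∞) * ENNReal.ofReal (s * s)).toReal :=
          ENNReal.toReal_mono (ENNReal.mul_ne_top (ENNReal.natCast_ne_top _)
            ENNReal.ofReal_ne_top) h1
      _ = I.card * (s * s) := h2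
  -- parity classes
  set cs : Finset (ℤ × ℤ) := {(0,0),(0,1),(1,0),(1,1)} with hcs
  set Ic : (ℤ × ℤ) → Finset (ℤ × ℤ) :=
    fun c => I.filter (fun p => p.1 % 2 = c.1 ∧ p.2 % 2 = c.2) with hIc
  have hsub : I ⊆ cs.biUnion Ic := by
    intro p hp
    have h1 := Int.emod_two_eq p.1
    have h2 := Int.emod_two_eq p.2
    have hc : (p.1 % 2, p.2 % 2) ∈ cs := by
      rcases h1 with h1 | h1 <;> rcases h2 with h2 | h2 <;>
        simp [hcs, h1, h2]
    exact Finset.mem_biUnion.mpr ⟨_, hc, Finset.mem_filter.mpr ⟨hp, rfl, rfl⟩⟩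
  obtain ⟨c, hcmem, hcmax⟩ := Finset.exists_max_image cs (fun c => (Ic c).card)
    ⟨(0,0), by simp [hcs]⟩
  have hcard : I.card ≤ 4 * (Ic c).card := by
    calc I.card ≤ (cs.biUnion Ic).card := Finset.card_le_card hsub
      _ ≤ ∑ c' ∈ cs, (Ic c').card := Finset.card_biUnion_le
      _ ≤ cs.card * (Ic c).card := by
          rw [← smul_eq_mul, ← Finset.sum_const]
          exact Finset.sum_le_sum hcmax
      _ ≤ 4 * (Ic c).card := by
          have : cs.card ≤ 4 := by
            rw [hcs]
            apply le_trans (Finset.card_insert_le _ _)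
            have := Finset.card_insert_le ((0:ℤ),(1:ℤ)) ({(1,0),(1,1)} : Finset (ℤ×ℤ))
            have := Finset.card_insert_le ((1:ℤ),(0:ℤ)) ({(1,1)} : Finset (ℤ×ℤ))
            simp_all
          exact Nat.mul_le_mul_right _ this
  -- choose points
  have hpt : ∀ p ∈ Ic c, ∃ z, z ∈ gsq s p ∩ S := by
    intro p hp
    have := (Finset.mem_filter.mp ((Finset.mem_filter.mp hp).1)).2
    exact this
  choose g hg using hpt
  set m := (Ic c).card with hm
  set e : Fin m ≃ {x // x ∈ Ic c} := (Ic c).equivFin.symm with he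
  refine ⟨m, fun j => g (e j).1 (e j).2, fun j => (hg _ _).2, ?_, ?_⟩
  · intro j k hjk
    have hne : ((e j : ℤ × ℤ)) ≠ (e k : ℤ × ℤ) := by
      intro hcc
      exact hjk (e.injective (Subtype.ext hcc))
    have hj := Finset.mem_filter.mp (e j).2
    have hk := Finset.mem_filter.mp (e k).2
    exact gsq_sep ht (hj.2.1.trans hk.2.1.symm) (hj.2.2.trans hk.2.2.symm) hne
      (hg _ (e j).2).1 (hg _ (e k).2).1
  · calc (MeasureTheory.volume S).toReal ≤ I.card * (s * s) := hvol
      _ ≤ (4 * m) * (s * s) := by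
          apply mul_le_mul_of_nonneg_right _ (by positivity)
          exact_mod_cast hcard
      _ = m * (16 * t^2) := by rw [hs_def]; ring


lemma cann_eq (r1 r2 : ℝ) (h0 : 0 ≤ r1) :
    {z : ℂ | r1 ≤ ‖z‖ ∧ ‖z‖ ≤ r2} =
      Metric.closedBall 0 r2 \ Metric.ball 0 r1 := by
  ext z
  simp only [Set.mem_setOf_eq, Set.mem_diff, Metric.mem_closedBall, Metric.mem_ball,
    Complex.dist_eq, sub_zero, not_lt]
  tauto

lemma volume_cann (r1 r2 : ℝ) (h0 : 0 ≤ r1) (h : r1 ≤ r2) :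
    (volume {z : ℂ | r1 ≤ ‖z‖ ∧ ‖z‖ ≤ r2}).toReal
      = (r2^2 - r1^2) * Real.pi := by
  rw [cann_eq r1 r2 h0, measure_diff (Metric.ball_subset_closedBall.trans
      (Metric.closedBall_subset_closedBall h)) measurableSet_ball.nullMeasurableSet
      (by rw [Complex.volume_ball]; exact ENNReal.mul_ne_top (by simp) ENNReal.coe_ne_top),
    Complex.volume_closedBall, Complex.volume_ball,
    ENNReal.toReal_sub_of_le]
  · rw [ENNReal.toReal_mul, ENNReal.toReal_mul, ENNReal.toReal_pow, ENNReal.toReal_pow,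
      ENNReal.toReal_ofReal h0, ENNReal.toReal_ofReal (h0.trans h), ENNReal.coe_toReal,
      NNReal.coe_real_pi]
    ring
  · apply mul_le_mul_left
    exact pow_le_pow_left' (ENNReal.ofReal_le_ofReal h) 2
  · exact ENNReal.mul_ne_top (by simp) ENNReal.coe_ne_top

lemma volume_cann_ne_top (r1 r2 : ℝ) :
    volume {z : ℂ | r1 ≤ ‖z‖ ∧ ‖z‖ ≤ r2} ≠ ⊤ := by
  apply ne_top_of_le_ne_top _ (measure_mono (_ : _ ⊆ Metric.closedBall (0:ℂ) r2))
  · rw [Complex.volume_closedBall]; exact ENNReal.mul_ne_top (by simp) ENNReal.coe_ne_top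
  · intro z hz
    simp only [Metric.mem_closedBall, Complex.dist_eq, sub_zero]
    exact hz.2

end Aux

theorem many_disjoint_disks_in_Tset (f : ℂ → ℂ)
    (hf : Differentiable ℂ f)
    (htrans : ¬ ∃ p : Polynomial ℂ, ∀ z, f z = p.eval z)
    (A B C r₀ : ℝ) (hA : 1 < A) (hB : 1 < B) (hC : 1 < C) (hr₀ : 1 < r₀)
    (hreg : ∀ r, r₀ ≤ r →
      A * Real.log (maxMod f r) ≤ Real.log (maxMod f (C * r)) ∧
      Real.log (maxMod f (C * r)) ≤ B * Real.log (maxMod f r))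
    (α₁ α₂ η : ℝ) (hα₁ : 0 < α₁) (hα₂ : 0 < α₂) (hη : 0 < η)
    (q lam : ℝ) (hq : 0 ≤ q) (hlam : 0 ≤ lam)
    (hdens : ∃ R₁ : ℝ, ∀ R, R₁ ≤ R → η < densIn (Tset f α₁ α₂ q lam) (annulus R))
    (μ : ℝ) (hμ : 0 < μ) :
    ∃ R₀ : ℝ, ∀ R, R₀ ≤ R →
      ∃ m : ℕ, 0 < m ∧
        η / 2 * (R / (2 * μ * R / (α₁ * Real.log (maxMod f R)))) ^ 2 ≤ (m : ℝ) ∧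
        ∃ a : Fin m → ℂ,
          (∀ j, a j ∈ Tset f α₁ α₂ q lam ∩ annulus R) ∧
          (∀ j, Metric.ball (a j) (2 * μ * R / (α₁ * Real.log (maxMod f R))) ⊆ annulus R) ∧
          (∀ j k, j ≠ k →
            Disjoint (Metric.ball (a j) (2 * μ * R / (α₁ * Real.log (maxMod f R))))
              (Metric.ball (a k) (2 * μ * R / (α₁ * Real.log (maxMod f R))))) := by
  classical
  have hreg' : ∀ r, r₀ ≤ r → A * Real.log (maxMod f r) ≤ Real.log (maxMod f (C * r)) :=
    fun r hr => (hreg r hr).1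
  have hπ3 : (3:ℝ) < Real.pi := Real.pi_gt_three
  have hπ0 : (0:ℝ) < Real.pi := Real.pi_pos
  have hπ8 : (0:ℝ) < 3*Real.pi - 8 := by nlinarith
  set K : ℝ := max (max 1 (2*μ/α₁)) (12*Real.pi*μ/(α₁*((3*Real.pi-8)*η))) with hK
  obtain ⟨R₂, hR₂⟩ := log_maxMod_large f hf htrans A C r₀ hA hC hr₀ hreg' K
  obtain ⟨R₁, hR₁⟩ := hdens
  refine ⟨max R₂ (max R₁ 1), fun R hR => ?_⟩
  have hRR₂ : R₂ ≤ R := (le_max_left _ _).trans hR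
  have hRR₁ : R₁ ≤ R := ((le_max_left _ _).trans (le_max_right _ _)).trans hR
  have hR1 : (1:ℝ) ≤ R := ((le_max_right _ _).trans (le_max_right _ _)).trans hR
  have hR0 : (0:ℝ) < R := lt_of_lt_of_le zero_lt_one hR1
  set LR : ℝ := Real.log (maxMod f R) with hLR
  have hLK : K ≤ LR := hR₂ R hRR₂
  have hL1 : (1:ℝ) ≤ LR := le_trans ((le_max_left _ _).trans (le_max_left _ _)) hLK
  have hL0 : (0:ℝ) < LR := lt_of_lt_of_le zero_lt_one hL1
  have hα₁L : (0:ℝ) < α₁ * LR := mul_pos hα₁ hL0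
  set t : ℝ := 2 * μ * R / (α₁ * LR) with ht_def
  have ht0 : (0:ℝ) < t := div_pos (by positivity) hα₁L
  have ht_eq : t * (α₁ * LR) = 2 * μ * R := by
    rw [ht_def]; field_simp
  have htR : t ≤ R := by
    have h1 : 2*μ/α₁ ≤ LR := le_trans ((le_max_right _ _).trans (le_max_left _ _)) hLK
    have h2 : 2*μ ≤ α₁ * LR := by rw [div_le_iff₀ hα₁] at h1; linarith
    have : t * (α₁ * LR) ≤ R * (α₁ * LR) := by
      rw [ht_eq]; nlinarith
    exact le_of_mul_le_mul_right this hα₁L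
  have ht6 : 6*Real.pi*t ≤ (3*Real.pi-8)*η*R := by
    have h1 : 12*Real.pi*μ/(α₁*((3*Real.pi-8)*η)) ≤ LR := (le_max_right _ _).trans hLK
    have h2 : 12*Real.pi*μ ≤ α₁*((3*Real.pi-8)*η) * LR := by
      rw [div_le_iff₀ (by positivity)] at h1; linarith
    have h3 : (6*Real.pi*t) * (α₁ * LR) ≤ ((3*Real.pi-8)*η*R) * (α₁ * LR) := by
      have : (6*Real.pi*t) * (α₁ * LR) = 6*Real.pi*(2*μ*R) := by
        linear_combination (6*Real.pi) * ht_eq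
      rw [this]; nlinarith
    exact le_of_mul_le_mul_right h3 hα₁L
  -- density information
  have hd : η < densIn (Tset f α₁ α₂ q lam) (annulus R) := hR₁ R hRR₁
  have hannA : annulus R = {z : ℂ | R ≤ ‖z‖ ∧ ‖z‖ ≤ 2*R} := rfl
  have hvolA : (MeasureTheory.volume (annulus R)).toReal = ((2*R)^2 - R^2) * Real.pi := by
    rw [hannA]; exact volume_cann R (2*R) hR0.le (by linarith)
  have hvolApos : 0 < (MeasureTheory.volume (annulus R)).toReal := by
    rw [hvolA]; nlinarith
  have hTA : η * (((2*R)^2 - R^2) * Real.pi)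
      < (MeasureTheory.volume (Tset f α₁ α₂ q lam ∩ annulus R)).toReal := by
    rw [← hvolA]
    unfold densIn at hd
    exact (lt_div_iff₀ hvolApos).mp hd
  -- the shrunken annulus and the good set
  set A' : Set ℂ := {z : ℂ | R + t ≤ ‖z‖ ∧ ‖z‖ ≤ 2*R - t} with hA'
  set S : Set ℂ := Tset f α₁ α₂ q lam ∩ A' with hS_def
  set s₁ : Set ℂ := {z : ℂ | R ≤ ‖z‖ ∧ ‖z‖ ≤ R + t} with hs₁
  set s₂ : Set ℂ := {z : ℂ | 2*R - t ≤ ‖z‖ ∧ ‖z‖ ≤ 2*R} with hs₂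
  have hsplit : Tset f α₁ α₂ q lam ∩ annulus R ⊆ S ∪ (s₁ ∪ s₂) := by
    rintro z ⟨hzT, hz1, hz2⟩
    by_cases hc1 : R + t ≤ ‖z‖
    · by_cases hc2 : ‖z‖ ≤ 2*R - t
      · exact Or.inl ⟨hzT, hc1, hc2⟩
      · exact Or.inr (Or.inr ⟨by linarith [not_le.mp hc2], hz2⟩)
    · exact Or.inr (Or.inl ⟨hz1, by linarith [not_le.mp hc1]⟩)
  have hs₁vol : (MeasureTheory.volume s₁).toReal = ((R+t)^2 - R^2) * Real.pi := by
    rw [hs₁]; exact volume_cann R (R+t) hR0.le (by linarith)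
  have hs₂vol : (MeasureTheory.volume s₂).toReal = ((2*R)^2 - (2*R-t)^2) * Real.pi := by
    rw [hs₂]; exact volume_cann (2*R-t) (2*R) (by linarith) (by linarith)
  have hSne : MeasureTheory.volume S ≠ ⊤ := by
    apply ne_top_of_le_ne_top (volume_cann_ne_top (R+t) (2*R-t))
    exact MeasureTheory.measure_mono Set.inter_subset_right
  have hs₁ne : MeasureTheory.volume s₁ ≠ ⊤ := volume_cann_ne_top _ _
  have hs₂ne : MeasureTheory.volume s₂ ≠ ⊤ := volume_cann_ne_top _ _
  have hsub : (MeasureTheory.volume (Tset f α₁ α₂ q lam ∩ annulus R)).toReal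
      ≤ (MeasureTheory.volume S).toReal + ((MeasureTheory.volume s₁).toReal
        + (MeasureTheory.volume s₂).toReal) := by
    have h1 : MeasureTheory.volume (Tset f α₁ α₂ q lam ∩ annulus R)
        ≤ MeasureTheory.volume S + (MeasureTheory.volume s₁ + MeasureTheory.volume s₂) :=
      le_trans (MeasureTheory.measure_mono hsplit) (le_trans (MeasureTheory.measure_union_le _ _)
        (add_le_add le_rfl (MeasureTheory.measure_union_le _ _)))
    have h2 := ENNReal.toReal_mono
      (ENNReal.add_ne_top.mpr ⟨hSne, ENNReal.add_ne_top.mpr ⟨hs₁ne, hs₂ne⟩⟩) h1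
    rwa [ENNReal.toReal_add hSne (ENNReal.add_ne_top.mpr ⟨hs₁ne, hs₂ne⟩),
      ENNReal.toReal_add hs₁ne hs₂ne] at h2
  have hvolS : 8*η*R^2 ≤ (MeasureTheory.volume S).toReal := by
    have hstrip : ((R+t)^2 - R^2) * Real.pi + ((2*R)^2 - (2*R-t)^2) * Real.pi
        = 6*R*t*Real.pi := by ring
    have h6R : 6*R*t*Real.pi ≤ (3*Real.pi-8)*η*R^2 := by
      calc 6*R*t*Real.pi = R*(6*Real.pi*t) := by ring
        _ ≤ R*((3*Real.pi-8)*η*R) := mul_le_mul_of_nonneg_left ht6 hR0.le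
        _ = (3*Real.pi-8)*η*R^2 := by ring
    have e1 : η*(((2*R)^2 - R^2)*Real.pi) = 3*Real.pi*η*R^2 - 8*η*R^2 + 8*η*R^2 := by ring
    linarith [hsub, hTA, hs₁vol, hs₂vol, hstrip, h6R, e1]
  -- packing
  have hSsub : S ⊆ Metric.closedBall 0 (2*R) := by
    rintro z ⟨_, _, hz2⟩
    simp only [Metric.mem_closedBall, Complex.dist_eq, sub_zero]
    linarith
  obtain ⟨m, a, ham, hsep, hcount⟩ := grid_packing S (2*R) t ht0 hSsub
  have hmlb : η/2 * (R/t)^2 ≤ (m:ℝ) := by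
    have h16 : (0:ℝ) < 16*t^2 := by positivity
    apply le_of_mul_le_mul_right _ h16
    have hrt : (R/t)^2 * t^2 = R^2 := by
      field_simp
    calc η/2 * (R/t)^2 * (16*t^2) = 8*η*((R/t)^2 * t^2) := by ring
      _ = 8*η*R^2 := by rw [hrt]
      _ ≤ (MeasureTheory.volume S).toReal := hvolS
      _ ≤ m * (16*t^2) := hcount
  have hm0 : 0 < m := by
    have h1 : (0:ℝ) < η/2 * (R/t)^2 := by positivity
    have : (0:ℝ) < (m:ℝ) := lt_of_lt_of_le h1 hmlb
    exact_mod_cast this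
  refine ⟨m, hm0, hmlb, a, ?_, ?_, ?_⟩
  · intro j
    obtain ⟨hT, h1, h2⟩ := ham j
    exact ⟨hT, by constructor <;> [linarith; linarith]⟩
  · intro j w hw
    rw [Metric.mem_ball, Complex.dist_eq] at hw
    obtain ⟨_, h1, h2⟩ := ham j
    have htri : |‖w‖ - ‖a j‖| ≤ ‖w - a j‖ :=
      abs_norm_sub_norm_le w (a j)
    rw [abs_le] at htri
    exact ⟨by linarith [htri.1], by linarith [htri.2]⟩
  · intro j k hjk
    exact Metric.ball_disjoint_ball (by linarith [hsep j k hjk])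
end
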